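/- arXiv:1604.07911 — 9 statements merged into one kernel-verified Lean document; each statement's English description precedes it below -/
import Mathlib

section
/- Let π satisfy Assumption 1 and let x : ℕ → ℝ satisfy x_i ≥ -1 for all i. If Σ_{i=1}^∞ x_i² = ∞ and limsup_{n→∞} S_n/A_n² > 0, then limsup_{n→∞} K_n^π = ∞. -/
open MeasureTheory Filter Set

/-- Partial sum `S_n = x_1 + ... + x_n`. -/
noncomputable def S (x : ℕ → ℝ) (n : ℕ) : ℝ := ∑ i ∈ Finset.range n, x i

/-- Sum of squares `A_n² = x_1² + ... + x_n²`. -/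
noncomputable def A2 (x : ℕ → ℝ) (n : ℕ) : ℝ := ∑ i ∈ Finset.range n, (x i) ^ 2

/-- Capital process of the Bayesian strategy with prior density `π`:
`K_n^π = ∫_0^1 ∏_{i=1}^n (1 + ε x_i) π(ε) dε`. -/
noncomputable def K (π : ℝ → ℝ) (x : ℕ → ℝ) (n : ℕ) : ℝ :=
  ∫ ε in Set.Ioo (0 : ℝ) 1, (∏ i ∈ Finset.range n, (1 + ε * x i)) * π ε

/-- Assumption 1: `π` is a prior density, bounded below by `δπ` near the origin,
and `ε ↦ ε·π(ε)` is (weakly) increasing near the origin. -/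
def Assumption1 (π : ℝ → ℝ) (επ δπ : ℝ) : Prop :=
  επ ∈ Set.Ioo (0 : ℝ) 1 ∧ 0 < δπ ∧
  (∀ ε ∈ Set.Icc (0 : ℝ) 1, 0 ≤ π ε) ∧
  MeasureTheory.IntegrableOn π (Set.Icc (0 : ℝ) 1) ∧
  (∀ ε ∈ Set.Ioo (0 : ℝ) επ, δπ ≤ π ε) ∧
  MonotoneOn (fun ε => ε * π ε) (Set.Ioo (0 : ℝ) επ)

/-- For `t ≥ -1/2`, `exp(t - 2t²) ≤ 1 + t`. -/
lemma exp_quad_le (t : ℝ) (ht : -(1/2 : ℝ) ≤ t) : Real.exp (t - 2 * t ^ 2) ≤ 1 + t := by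
  have h1 : (0 : ℝ) < 1 + t := by linarith
  have h2 : (0 : ℝ) < (1 + t)⁻¹ := inv_pos.2 h1
  have h3 := Real.log_le_sub_one_of_pos h2
  rw [Real.log_inv] at h3
  have h5 : (1 + t)⁻¹ * (1 + t) = 1 := inv_mul_cancel₀ h1.ne'
  have h6 : t - 2 * t ^ 2 ≤ 1 - (1 + t)⁻¹ := by
    nlinarith [mul_nonneg (sq_nonneg t) (show (0:ℝ) ≤ 1 + 2 * t by linarith)]
  have h4 : t - 2 * t ^ 2 ≤ Real.log (1 + t) := by linarith
  calc Real.exp (t - 2 * t ^ 2) ≤ Real.exp (Real.log (1 + t)) := Real.exp_le_exp.2 h4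
    _ = 1 + t := Real.exp_log h1

/-- Product lower bound via exponential. -/
lemma exp_le_prod (x : ℕ → ℝ) (hx : ∀ i, -1 ≤ x i) (ε : ℝ) (hε0 : 0 < ε) (hε : ε ≤ 1/2)
    (n : ℕ) :
    Real.exp (ε * S x n - 2 * ε ^ 2 * A2 x n) ≤ ∏ i ∈ Finset.range n, (1 + ε * x i) := by
  have hsum : ε * S x n - 2 * ε ^ 2 * A2 x n
      = ∑ i ∈ Finset.range n, (ε * x i - 2 * (ε * x i) ^ 2) := by
    simp only [S, A2, Finset.mul_sum, ← Finset.sum_sub_distrib]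
    exact Finset.sum_congr rfl fun i _ => by ring
  rw [hsum, Real.exp_sum]
  refine Finset.prod_le_prod (fun i _ => (Real.exp_pos _).le) (fun i _ => ?_)
  have ht : -(1/2 : ℝ) ≤ ε * x i := by nlinarith [hx i]
  exact exp_quad_le (ε * x i) ht

set_option maxHeartbeats 1000000 in
/-- The key per-`n` lower bound on the capital process. -/
lemma key_bound (π : ℝ → ℝ) (επ δπ : ℝ) (hδ : 0 < δπ)
    (hnn : ∀ ε ∈ Set.Icc (0:ℝ) 1, 0 ≤ π ε)
    (hintπ : MeasureTheory.IntegrableOn π (Set.Icc (0:ℝ) 1))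
    (hlb : ∀ ε ∈ Set.Ioo (0:ℝ) επ, δπ ≤ π ε)
    (x : ℕ → ℝ) (hx : ∀ i, -1 ≤ x i)
    (c₀ r N : ℝ) (hc₀pos : 0 < c₀) (hr0 : 0 < r) (hrc : 2 * r ≤ c₀)
    (hrhalf : r / 2 < επ) (hrq : r / 2 ≤ 1 / 2)
    (n : ℕ) (h1 : c₀ < S x n / A2 x n) (h2 : N ≤ A2 x n) :
    r / 4 * (δπ * Real.exp (r ^ 2 / 4 * N)) ≤ K π x n := by
  have hA2nn : 0 ≤ A2 x n := Finset.sum_nonneg fun i _ => sq_nonneg _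
  have hA2pos : 0 < A2 x n := by
    rcases hA2nn.lt_or_eq with h | h
    · exact h
    · exfalso; rw [← h, div_zero] at h1; linarith
  have hS : c₀ * A2 x n < S x n := (lt_div_iff₀ hA2pos).1 h1
  set C : ℝ := δπ * Real.exp (r ^ 2 / 4 * N) with hCdef
  -- subinterval
  have hsub : Icc (r / 4) (r / 2) ⊆ Ioo (0 : ℝ) 1 :=
    fun ε hε => ⟨lt_of_lt_of_le (by linarith) hε.1, lt_of_le_of_lt hε.2 (by linarith)⟩
  -- positivity of the integrand on Ioo 0 1
  have hfnn : ∀ ε ∈ Ioo (0 : ℝ) 1,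
      (0:ℝ) ≤ (∏ i ∈ Finset.range n, (1 + ε * x i)) * π ε := by
    intro ε hε
    refine mul_nonneg (Finset.prod_nonneg fun i _ => ?_) (hnn ε ⟨hε.1.le, hε.2.le⟩)
    nlinarith [hx i, hε.1, hε.2]
  -- integrability of the integrand on Ioo 0 1
  have hπInt : IntegrableOn π (Ioo 0 1) := hintπ.mono_set Ioo_subset_Icc_self
  have hfInt : IntegrableOn
      (fun ε => (∏ i ∈ Finset.range n, (1 + ε * x i)) * π ε) (Ioo 0 1) := by
    refine Integrable.bdd_mul (c := ∏ i ∈ Finset.range n, (1 + |x i|)) hπInt ?_ ?_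
    · exact Continuous.aestronglyMeasurable (continuous_finset_prod _ fun i _ =>
        continuous_const.add (continuous_id.mul continuous_const))
    · refine (ae_restrict_iff' measurableSet_Ioo).2 (Filter.Eventually.of_forall ?_)
      intro ε hε
      rw [Real.norm_eq_abs, Finset.abs_prod]
      refine Finset.prod_le_prod (fun i _ => abs_nonneg _) (fun i _ => ?_)
      have h01 : (0:ℝ) < ε := hε.1
      have h02 : ε < 1 := hε.2
      rw [abs_le]
      constructor
      · nlinarith [neg_abs_le (x i), le_abs_self (x i), abs_nonneg (x i)]
      · nlinarith [neg_abs_le (x i), le_abs_self (x i), abs_nonneg (x i)]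
  -- pointwise lower bound on the subinterval
  have hpt : ∀ ε ∈ Icc (r / 4) (r / 2),
      C ≤ (∏ i ∈ Finset.range n, (1 + ε * x i)) * π ε := by
    intro ε hε
    have hε0 : 0 < ε := lt_of_lt_of_le (by linarith) hε.1
    have hεb : ε ≤ r / 2 := hε.2
    have hεa : r / 4 ≤ ε := hε.1
    have hεhalf : ε ≤ 1 / 2 := by linarith
    have hπε : δπ ≤ π ε := hlb ε ⟨hε0, lt_of_le_of_lt hεb hrhalf⟩
    -- exponent bound
    have e1 : ε * (c₀ * A2 x n) ≤ ε * S x n := mul_le_mul_of_nonneg_left hS.le hε0.le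
    have e2 : 2 * ε ^ 2 * A2 x n ≤ ε * r * A2 x n := by
      have h2e : 2 * ε ^ 2 ≤ ε * r := by nlinarith
      exact mul_le_mul_of_nonneg_right h2e hA2nn
    have e3 : ε * ((c₀ - r) * A2 x n) ≤ ε * S x n - 2 * ε ^ 2 * A2 x n := by nlinarith
    have e4 : r ^ 2 / 4 * A2 x n ≤ ε * ((c₀ - r) * A2 x n) := by
      have h7 : (0:ℝ) ≤ (c₀ - r) * A2 x n := mul_nonneg (by linarith) hA2nn
      have h8 : r / 4 * ((c₀ - r) * A2 x n) ≤ ε * ((c₀ - r) * A2 x n) :=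
        mul_le_mul_of_nonneg_right hεa h7
      nlinarith [mul_nonneg (show (0:ℝ) ≤ c₀ - r - r by linarith)
        (mul_nonneg hr0.le hA2nn)]
    have e5 : r ^ 2 / 4 * N ≤ ε * S x n - 2 * ε ^ 2 * A2 x n := by
      have : r ^ 2 / 4 * N ≤ r ^ 2 / 4 * A2 x n :=
        mul_le_mul_of_nonneg_left h2 (by positivity)
      linarith
    have hexp : Real.exp (r ^ 2 / 4 * N) ≤ ∏ i ∈ Finset.range n, (1 + ε * x i) :=
      (Real.exp_le_exp.2 e5).trans (exp_le_prod x hx ε hε0 hεhalf n)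
    have hmul : Real.exp (r ^ 2 / 4 * N) * δπ
        ≤ (∏ i ∈ Finset.range n, (1 + ε * x i)) * π ε :=
      mul_le_mul hexp hπε hδ.le ((Real.exp_pos _).le.trans hexp)
    calc C = Real.exp (r ^ 2 / 4 * N) * δπ := mul_comm _ _
      _ ≤ _ := hmul
  -- integral comparison
  have hIccInt : IntegrableOn
      (fun ε => (∏ i ∈ Finset.range n, (1 + ε * x i)) * π ε) (Icc (r / 4) (r / 2)) :=
    hfInt.mono_set hsub
  have h5 : ∫ ε in Icc (r / 4) (r / 2), C
      ≤ ∫ ε in Icc (r / 4) (r / 2),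
          (∏ i ∈ Finset.range n, (1 + ε * x i)) * π ε :=
    setIntegral_mono_on (integrableOn_const measure_Icc_lt_top.ne) hIccInt
      measurableSet_Icc hpt
  have h6 : (∫ ε in Icc (r / 4) (r / 2), C) = r / 4 * C := by
    rw [setIntegral_const, measureReal_def, Real.volume_Icc, smul_eq_mul,
      ENNReal.toReal_ofReal (by linarith : (0:ℝ) ≤ r / 2 - r / 4)]
    ring
  have h4 : ∫ ε in Icc (r / 4) (r / 2),
      (∏ i ∈ Finset.range n, (1 + ε * x i)) * π ε ≤ K π x n := by
    refine setIntegral_mono_set hfInt ?_ (HasSubset.Subset.eventuallyLE hsub)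
    exact (ae_restrict_iff' measurableSet_Ioo).2 (Filter.Eventually.of_forall hfnn)
  calc r / 4 * (δπ * Real.exp (r ^ 2 / 4 * N)) = r / 4 * C := rfl
    _ = ∫ ε in Icc (r / 4) (r / 2), C := h6.symm
    _ ≤ ∫ ε in Icc (r / 4) (r / 2), (∏ i ∈ Finset.range n, (1 + ε * x i)) * π ε := h5
    _ ≤ K π x n := h4

set_option maxHeartbeats 1000000 in
theorem slln_self_normalized (π : ℝ → ℝ) (επ δπ : ℝ) (hπ : Assumption1 π επ δπ)
    (x : ℕ → ℝ) (hx : ∀ i, -1 ≤ x i)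
    (hA : Filter.Tendsto (A2 x) Filter.atTop Filter.atTop)
    (hls : 0 < Filter.limsup (fun n => ((S x n / A2 x n : ℝ) : EReal)) Filter.atTop) :
    Filter.limsup (fun n => ((K π x n : ℝ) : EReal)) Filter.atTop = ⊤ := by
  obtain ⟨⟨hεπ0, hεπ1⟩, hδ, hnn, hintπ, hlb, -⟩ := hπ
  -- extract a positive real constant c₀ below the limsup
  obtain ⟨c, hc0, hclt⟩ := exists_between hls
  have hfreq0 : ∃ᶠ n in atTop, c < ((S x n / A2 x n : ℝ) : EReal) :=
    Filter.frequently_lt_of_lt_limsup (by isBoundedDefault) hclt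
  have hcnetop : c ≠ ⊤ := by
    obtain ⟨n, hn⟩ := hfreq0.exists
    exact (hn.trans (EReal.coe_lt_top _)).ne
  have hcnebot : c ≠ ⊥ := ne_bot_of_gt hc0
  set c₀ : ℝ := c.toReal with hc₀def
  have hcoe : (c₀ : EReal) = c := EReal.coe_toReal hcnetop hcnebot
  have hc₀pos : 0 < c₀ := by
    have : ((0 : ℝ) : EReal) < (c₀ : EReal) := by rw [hcoe]; exact_mod_cast hc0
    exact_mod_cast this
  have hfreq : ∃ᶠ n in atTop, c₀ < S x n / A2 x n := by
    refine hfreq0.mono fun n hn => ?_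
    rw [← hcoe] at hn
    exact_mod_cast hn
  -- basic parameters
  set r : ℝ := min (c₀ / 2) (επ / 2) with hrdef
  have hr0 : 0 < r := lt_min (by linarith) (by linarith)
  have hrc : r ≤ c₀ / 2 := min_le_left _ _
  have hrε : r ≤ επ / 2 := min_le_right _ _
  have hM : ∀ M : ℝ, (M : EReal) ≤ Filter.limsup (fun n => ((K π x n : ℝ) : EReal)) atTop := by
    intro M
    have htend : Tendsto (fun N : ℝ => r / 4 * (δπ * Real.exp (r ^ 2 / 4 * N)))
        atTop atTop := by
      refine Tendsto.const_mul_atTop (by linarith) ?_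
      refine Tendsto.const_mul_atTop hδ ?_
      exact Real.tendsto_exp_atTop.comp (Tendsto.const_mul_atTop (by positivity) tendsto_id)
    obtain ⟨N, hN⟩ := (htend.eventually_ge_atTop M).exists
    have hev : ∀ᶠ n in atTop, N ≤ A2 x n := hA.eventually_ge_atTop N
    have hfr : ∃ᶠ n in atTop, (M : EReal) ≤ ((K π x n : ℝ) : EReal) := by
      refine (hfreq.and_eventually hev).mono fun n hn => ?_
      have hKn : M ≤ K π x n := hN.trans
        (key_bound π επ δπ hδ hnn hintπ hlb x hx c₀ r N hc₀pos hr0 (by linarith)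
          (by linarith) (by linarith) n hn.1 hn.2)
      exact_mod_cast hKn
    exact Filter.le_limsup_of_frequently_le hfr
  by_contra h
  obtain ⟨M, hLM, -⟩ := EReal.exists_between_coe_real (Ne.lt_top h)
  exact absurd (hM M) (not_le.2 hLM)
end

section
/- Let π satisfy Assumption 1 with constants ε_π, δ_π, let n ≥ 1 and let x_1,...,x_n be reals with x_i ≥ -1 for all i. For any C ∈ (0, min(ε_π, 1/2)), if 0 < S_n/A_n² < C/2, then K_n^π ≥ (√C/6)·(S_n/A_n²)·π(S_n/A_n²)·exp((1-2C)·S_n²/(2·A_n²)). -/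
open MeasureTheory Filter Set

lemma log_ineq (c v : ℝ) (hc0 : 0 ≤ c) (hc1 : c < 1) (hv : -c ≤ v) :
    Real.exp (v - v ^ 2 / (2 * (1 - c))) ≤ 1 + v := by
  have h1c : (0:ℝ) < 1 - c := by linarith
  have h1v : (0:ℝ) < 1 + v := by linarith
  rw [← Real.exp_log h1v, Real.exp_le_exp]
  set g : ℝ → ℝ := fun w => Real.log (1 + w) - w + w ^ 2 / (2 * (1 - c)) with hg
  have hg0 : g 0 = 0 := by simp [hg]
  have hderiv : ∀ w : ℝ, -1 < w →
      HasDerivAt g (w * (w + c) / ((1 - c) * (1 + w))) w := by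
    intro w hw
    have hne : (1 : ℝ) + w ≠ 0 := by linarith
    have h1 : HasDerivAt (fun w : ℝ => 1 + w) 1 w := by
      simpa using (hasDerivAt_id w).const_add (1:ℝ)
    have h2 : HasDerivAt (fun w : ℝ => Real.log (1 + w)) ((1 + w)⁻¹) w := by
      have := (Real.hasDerivAt_log hne).comp w h1
      rw [mul_one] at this
      exact this
    have h3 : HasDerivAt (fun w : ℝ => w ^ 2 / (2 * (1 - c)))
        ((2 * w ^ 1) / (2 * (1 - c))) w := (hasDerivAt_pow 2 w).div_const _
    have h4 := (h2.sub (hasDerivAt_id w)).add h3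
    refine h4.congr_deriv ?_
    have h1c' : (1:ℝ) - c ≠ 0 := h1c.ne'
    field_simp
    ring
  suffices h : 0 ≤ g v by
    have : g v = Real.log (1 + v) - v + v ^ 2 / (2 * (1 - c)) := rfl
    linarith [this ▸ h]
  rcases le_or_gt 0 v with hv0 | hv0
  · have hmono : MonotoneOn g (Ici (0:ℝ)) := by
      apply monotoneOn_of_deriv_nonneg (convex_Ici 0)
      · intro w hw
        exact (hderiv w (by linarith [mem_Ici.mp hw])).differentiableAt.continuousAt.continuousWithinAt
      · intro w hw
        rw [interior_Ici] at hw
        exact (hderiv w (by linarith [mem_Ioi.mp hw])).differentiableAt.differentiableWithinAt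
      · intro w hw
        rw [interior_Ici] at hw
        have hw' : 0 < w := hw
        rw [(hderiv w (by linarith)).deriv]
        positivity
    have := hmono (self_mem_Ici) (mem_Ici.mpr hv0) hv0
    linarith [hg0 ▸ this]
  · have hanti : AntitoneOn g (Icc (-c) (0:ℝ)) := by
      apply antitoneOn_of_deriv_nonpos (convex_Icc _ _)
      · intro w hw
        exact (hderiv w (by linarith [hw.1])).differentiableAt.continuousAt.continuousWithinAt
      · intro w hw
        rw [interior_Icc] at hw
        exact (hderiv w (by linarith [hw.1])).differentiableAt.differentiableWithinAt
      · intro w hw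
        rw [interior_Icc] at hw
        obtain ⟨hw1, hw2⟩ := hw
        rw [(hderiv w (by linarith)).deriv]
        apply div_nonpos_of_nonpos_of_nonneg
        · nlinarith
        · nlinarith
    have := hanti (mem_Icc.mpr ⟨hv, hv0.le⟩) (mem_Icc.mpr ⟨by linarith, le_refl _⟩) hv0.le
    linarith [hg0 ▸ this]


-- endpoint 2 scalar inequality
lemma scalarE2 (r s0 : ℝ) (hr0 : 0 < r) (hr34 : r ≤ 3/4) (hs0 : 0 ≤ s0)
    (hw2 : s0 ≤ (4/21) * r) :
    (1 - 2*r^2) * (1 - 4*r^2/7) ≤ 2 * (1 - 4*r^2/7) * (1 + s0) - (1 + s0)^2 := by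
  nlinarith [sq_nonneg r, sq_nonneg s0, mul_nonneg hs0 hr0.le, sq_nonneg (r*s0),
    mul_nonneg (mul_nonneg hr0.le hr0.le) hr0.le, sq_nonneg (r - 3/4),
    mul_nonneg (mul_nonneg hr0.le hr0.le) hs0,
    mul_nonneg (sub_nonneg.2 hw2) (mul_nonneg hr0.le hr0.le)]

-- endpoint 1 scalar inequality
lemma scalarE1 (C : ℝ) (hC0 : 0 < C) (hC12 : C < 1/2) :
    (1 - 2*C) * (1 - 4*C/7) ≤ 2 * (1 - 4*C/7) - 1 := by nlinarith

-- interpolation for concave quadratic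
lemma quad_interp (D t b ε Q : ℝ) (htb : t < b) (h1 : t ≤ ε) (h2 : ε ≤ b)
    (E1 : Q ≤ 2*D*t*t - t^2) (E2 : Q ≤ 2*D*t*b - b^2) : Q ≤ 2*D*t*ε - ε^2 := by
  have key : (b-t)*(2*D*t*ε - ε^2 - Q) =
      (b-ε)*((2*D*t*t - t^2) - Q) + (ε-t)*((2*D*t*b - b^2) - Q) + (b-t)*((ε-t)*(b-ε)) := by
    ring
  have h3 : 0 ≤ (b-t)*(2*D*t*ε - ε^2 - Q) := by
    rw [key]
    have := mul_nonneg (sub_nonneg.2 h2) (sub_nonneg.2 E1)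
    have := mul_nonneg (sub_nonneg.2 h1) (sub_nonneg.2 E2)
    have := mul_nonneg (sub_nonneg.2 htb.le)
      (mul_nonneg (sub_nonneg.2 h1) (sub_nonneg.2 h2))
    linarith
  nlinarith [htb]

lemma prod_lb (n : ℕ) (x : ℕ → ℝ) (hx : ∀ i, -1 ≤ x i) (ε : ℝ) (hε : ε ∈ Set.Ioo (0:ℝ) 1) :
    Real.exp (ε * S x n - ε ^ 2 * A2 x n / (2 * (1 - ε))) ≤
      ∏ i ∈ Finset.range n, (1 + ε * x i) := by
  have key : ε * S x n - ε ^ 2 * A2 x n / (2 * (1 - ε)) =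
      ∑ i ∈ Finset.range n, (ε * x i - (ε * x i) ^ 2 / (2 * (1 - ε))) := by
    rw [Finset.sum_sub_distrib, ← Finset.sum_div, S, A2, Finset.mul_sum, Finset.mul_sum]
    congr 1
    congr 1
    apply Finset.sum_congr rfl
    intro i _
    ring
  rw [key, Real.exp_sum]
  apply Finset.prod_le_prod
  · intro i _; exact (Real.exp_pos _).le
  · intro i _
    exact log_ineq ε (ε * x i) hε.1.le hε.2 (by nlinarith [hx i, hε.1])

set_option maxHeartbeats 2000000 in
theorem basic_inequality (π : ℝ → ℝ) (επ δπ : ℝ) (hπ : Assumption1 π επ δπ)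
    (n : ℕ) (hn : 1 ≤ n) (x : ℕ → ℝ) (hx : ∀ i, -1 ≤ x i)
    (C : ℝ) (hC : C ∈ Set.Ioo 0 (min επ (1 / 2)))
    (hpos : 0 < S x n / A2 x n) (hup : S x n / A2 x n < C / 2) :
    Real.sqrt C / 6 * (S x n / A2 x n) * π (S x n / A2 x n) *
      Real.exp ((1 - 2 * C) * (S x n) ^ 2 / (2 * A2 x n)) ≤ K π x n := by
  obtain ⟨⟨hεπ0, hεπ1⟩, hδπ, hπnn, hπint, hπlb, hπmono⟩ := hπ
  obtain ⟨hC0, hCmin⟩ := hC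
  have hCεπ : C < επ := lt_of_lt_of_le hCmin (min_le_left _ _)
  have hC12 : C < 1/2 := lt_of_lt_of_le hCmin (min_le_right _ _)
  -- positivity of A2 and S
  have hA2nn : 0 ≤ A2 x n := Finset.sum_nonneg (fun i _ => sq_nonneg _)
  have hA2 : 0 < A2 x n := by
    rcases hA2nn.lt_or_eq with h | h
    · exact h
    · exfalso; rw [← h, div_zero] at hpos; exact lt_irrefl 0 hpos
  set t : ℝ := S x n / A2 x n with ht
  have hS : 0 < S x n := by
    have := mul_pos hpos hA2
    rwa [div_mul_cancel₀ _ hA2.ne'] at this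
  have hSt : S x n = t * A2 x n := by
    rw [ht, div_mul_cancel₀ _ hA2.ne']
  -- constants
  set r : ℝ := Real.sqrt C with hr
  have hr2 : r ^ 2 = C := Real.sq_sqrt hC0.le
  have hr0 : 0 < r := Real.sqrt_pos.2 hC0
  have hr34 : r ≤ 3/4 := by nlinarith
  set u : ℝ := r / 6 with hu
  have hu0 : 0 < u := by positivity
  have hu18 : u ≤ 1/8 := by rw [hu]; linarith
  have h1u : (0:ℝ) < 1 - u := by linarith
  set s0 : ℝ := u / (1 - u) with hs0def
  have hs0 : 0 < s0 := div_pos hu0 h1u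
  have hs0u : s0 * (1 - u) = u := div_mul_cancel₀ _ h1u.ne'
  have hs0le : s0 ≤ (8/7) * u := by
    rw [hs0def, div_le_iff₀ h1u]; nlinarith
  have hs017 : s0 ≤ 1/7 := by nlinarith
  set b : ℝ := t * (1 + s0) with hb
  have htb : t < b := by
    rw [hb]; nlinarith [mul_pos hpos hs0]
  have hbC : b < 4 * C / 7 := by
    have h1 : b ≤ t * (8/7) := by
      rw [hb]; nlinarith [mul_le_mul_of_nonneg_left hs017 hpos.le]
    linarith
  have hbεπ : b < επ := by linarith
  have hb1 : b < 1 := by linarith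
  have hb0 : 0 < b := lt_trans hpos htb
  -- the exponent target
  set R : ℝ := (1 - 2 * C) * (S x n) ^ 2 / (2 * A2 x n) with hR
  set D : ℝ := 1 - 4 * C / 7 with hD
  have hD0 : (0:ℝ) < D := by rw [hD]; linarith
  clear_value t r u s0 b R D
  -- quadratic endpoint inequalities
  have hq : ∀ ε : ℝ, t ≤ ε → ε ≤ b → (1 - 2*C) * t^2 * D ≤ 2 * D * t * ε - ε ^ 2 := by
    intro ε hε1 hε2
    have E1 : (1 - 2*C) * t^2 * D ≤ 2 * D * t * t - t ^ 2 := by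
      have h := mul_le_mul_of_nonneg_left (scalarE1 C hC0 hC12) (sq_nonneg t)
      rw [hD]
      nlinarith [h]
    have E2 : (1 - 2*C) * t^2 * D ≤ 2 * D * t * b - b ^ 2 := by
      have hw2 : s0 ≤ (4/21) * r := by
        have h78 : (8/7) * u = (4/21) * r := by rw [hu]; ring
        linarith [hs0le]
      have h := mul_le_mul_of_nonneg_left (scalarE2 r s0 hr0 hr34 hs0.le hw2) (sq_nonneg t)
      rw [hb, hD, ← hr2]
      nlinarith [h]
    exact quad_interp D t b ε _ htb hε1 hε2 E1 E2
  -- pointwise exponent bound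
  have hexp : ∀ ε ∈ Ioo t b, R ≤ ε * S x n - ε ^ 2 * A2 x n / (2 * (1 - ε)) := by
    intro ε hε
    obtain ⟨hε1, hε2⟩ := hε
    have hε0 : 0 < ε := lt_trans hpos hε1
    have h1ε : D ≤ 1 - ε := by rw [hD]; linarith [hε2, hbC]
    have h1ε0 : (0:ℝ) < 1 - ε := lt_of_lt_of_le hD0 h1ε
    have hdiv : ε ^ 2 * A2 x n / (2 * (1 - ε)) ≤ ε ^ 2 * A2 x n / (2 * D) := by
      apply div_le_div_of_nonneg_left (by positivity) (by positivity) (by linarith)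
    have hq' := hq ε hε1.le hε2.le
    have hReq : R = (1 - 2*C) * t^2 * A2 x n / 2 := by
      rw [hR, hSt]; field_simp
    have key : R ≤ ε * S x n - ε ^ 2 * A2 x n / (2 * D) := by
      rw [hReq, hSt, ← sub_nonneg]
      have heq : ε * (t * A2 x n) - ε ^ 2 * A2 x n / (2 * D) -
          (1 - 2*C) * t^2 * A2 x n / 2 =
          A2 x n * ((2 * D * t * ε - ε ^ 2) - (1 - 2*C) * t^2 * D) / (2 * D) := by
        field_simp
      rw [heq]
      exact div_nonneg (mul_nonneg hA2.le (sub_nonneg.2 hq')) (by positivity)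
    linarith
  -- prior lower bound
  have hπt : δπ ≤ π t := hπlb t ⟨hpos, by linarith [hup]⟩
  have hπtnn : 0 ≤ π t := le_trans hδπ.le hπt
  have hπlow : ∀ ε ∈ Ioo t b, (1 - u) * π t ≤ π ε := by
    intro ε hε
    obtain ⟨hε1, hε2⟩ := hε
    have hε0 : 0 < ε := lt_trans hpos hε1
    have hmem1 : t ∈ Ioo (0:ℝ) επ := ⟨hpos, by linarith [hup]⟩
    have hmem2 : ε ∈ Ioo (0:ℝ) επ := ⟨hε0, by linarith⟩
    have hmono := hπmono hmem1 hmem2 hε1.le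
    simp only at hmono
    have h1 : (1 - u) * π t * ε ≤ (1 - u) * π t * b :=
      mul_le_mul_of_nonneg_left hε2.le (by positivity)
    have h2 : (1 - u) * π t * b = t * π t := by
      rw [hb]; linear_combination (π t * t) * hs0u
    have h3 : (1 - u) * π t * ε ≤ ε * π ε := by
      rw [h2] at h1; linarith
    have := le_of_mul_le_mul_right (by linarith [h3] : (1 - u) * π t * ε ≤ π ε * ε) hε0
    exact this
  -- pointwise integrand bound on Ioo t b
  set F : ℝ → ℝ := fun ε => ∏ i ∈ Finset.range n, (1 + ε * x i) with hF
  have hpoint : ∀ ε ∈ Ioo t b, Real.exp R * ((1 - u) * π t) ≤ F ε * π ε := by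
    intro ε hε
    have hε01 : ε ∈ Ioo (0:ℝ) 1 := ⟨lt_trans hpos hε.1, lt_trans hε.2 hb1⟩
    have h1 : Real.exp R ≤ F ε :=
      le_trans (Real.exp_le_exp.2 (hexp ε hε)) (prod_lb n x hx ε hε01)
    exact mul_le_mul h1 (hπlow ε hε) (by positivity) (le_trans (Real.exp_pos _).le h1)
  -- integrability
  have hFcont : Continuous F := by
    apply continuous_finset_prod
    intro i _
    exact continuous_const.add (continuous_id.mul continuous_const)
  have hint1 : IntegrableOn (fun ε => F ε * π ε) (Icc (0:ℝ) 1) :=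
    hπint.continuousOn_mul hFcont.continuousOn isCompact_Icc
  have hint2 : IntegrableOn (fun ε => F ε * π ε) (Ioo (0:ℝ) 1) :=
    hint1.mono_set Ioo_subset_Icc_self
  have hsub : Ioo t b ⊆ Ioo (0:ℝ) 1 := fun y hy => ⟨lt_trans hpos hy.1, lt_trans hy.2 hb1⟩
  have hint3 : IntegrableOn (fun ε => F ε * π ε) (Ioo t b) := hint2.mono_set hsub
  -- nonnegativity of integrand
  have hFnn : ∀ ε ∈ Ioo (0:ℝ) 1, 0 ≤ F ε * π ε := by
    intro ε hε
    have h1 : 0 ≤ F ε := by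
      apply Finset.prod_nonneg
      intro i _
      nlinarith [hx i, hε.1, hε.2]
    exact mul_nonneg h1 (hπnn ε ⟨hε.1.le, hε.2.le⟩)
  -- chain of inequalities
  have step1 : Real.exp R * ((1 - u) * π t) * (b - t) ≤ ∫ ε in Ioo t b, F ε * π ε := by
    have := MeasureTheory.setIntegral_ge_of_const_le (measurableSet_Ioo)
      (by rw [Real.volume_Ioo]; exact ENNReal.ofReal_ne_top) hpoint hint3
    rw [Real.volume_real_Ioo_of_le (by linarith), smul_eq_mul] at this
    linarith
  have step2 : ∫ ε in Ioo t b, F ε * π ε ≤ ∫ ε in Ioo (0:ℝ) 1, F ε * π ε := by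
    apply setIntegral_mono_set hint2
    · exact (ae_restrict_mem measurableSet_Ioo).mono hFnn
    · exact HasSubset.Subset.eventuallyLE hsub
  have hKeq : K π x n = ∫ ε in Ioo (0:ℝ) 1, F ε * π ε := rfl
  have hfinal : u * t * π t * Real.exp R =
      Real.exp R * ((1 - u) * π t) * (b - t) := by
    rw [hb]
    linear_combination (-(Real.exp R * π t * t)) * hs0u
  rw [hKeq]
  calc u * t * π t * Real.exp R
      = Real.exp R * ((1 - u) * π t) * (b - t) := hfinal
    _ ≤ ∫ ε in Ioo t b, F ε * π ε := step1
    _ ≤ ∫ ε in Ioo (0:ℝ) 1, F ε * π ε := step2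
end

section
/- Let π satisfy Assumption 1 with constants ε_π, δ_π, let n ≥ 1 and let x_1,...,x_n be reals with x_i ≥ -1 for all i. If S_n > 0, S_n²/A_n² > max(2, 1/ε_π) and S_n³/A_n⁴ < 1/2, then K_n^π ≥ (1/(6e))·(1/A_n)·π(S_n/A_n²)·exp(S_n²/(2·A_n²)). -/
open MeasureTheory Filter Set

lemma hasDerivAt_log_one_add {u : ℝ} (hu : 0 < 1 + u) :
    HasDerivAt (fun v : ℝ => Real.log (1 + v)) (1 / (1 + u)) u := by
  have h1 : HasDerivAt (fun v : ℝ => 1 + v) 1 u := (hasDerivAt_id u).const_add 1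
  have h2 := (Real.hasDerivAt_log (ne_of_gt hu)).comp u h1
  simpa [one_div, Function.comp_def] using h2

lemma log_quad_lb {u : ℝ} (hu : 0 ≤ u) : u - u ^ 2 / 2 ≤ Real.log (1 + u) := by
  have hder : ∀ v : ℝ, -1 < v →
      HasDerivAt (fun v : ℝ => Real.log (1 + v) - (v - v ^ 2 / 2)) (v ^ 2 / (1 + v)) v := by
    intro v hv
    have h1 := (hasDerivAt_log_one_add (by linarith : (0:ℝ) < 1 + v)).sub
        ((hasDerivAt_id v).sub ((hasDerivAt_pow 2 v).div_const 2))
    refine h1.congr_deriv ?_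
    have h0 : (1:ℝ) + v ≠ 0 := by linarith
    push_cast
    field_simp
    ring
  have hmono : MonotoneOn (fun v : ℝ => Real.log (1 + v) - (v - v ^ 2 / 2)) (Ici 0) := by
    apply monotoneOn_of_deriv_nonneg (convex_Ici 0)
    · exact fun v hv => (hder v (by linarith [hv.out])).continuousAt.continuousWithinAt
    · intro v hv
      rw [interior_Ici] at hv
      exact (hder v (by linarith [hv.out])).differentiableAt.differentiableWithinAt
    · intro v hv
      rw [interior_Ici] at hv
      have hv0 : (0:ℝ) < v := hv
      rw [(hder v (by linarith)).deriv]
      positivity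
  have h := hmono self_mem_Ici hu hu
  norm_num at h
  linarith

lemma log_cubic_lb {u : ℝ} (hu : -1/2 ≤ u) (hu2 : u ≤ 0) :
    u - u ^ 2 / 2 + u ^ 3 ≤ Real.log (1 + u) := by
  have hder : ∀ v : ℝ, -1 < v →
      HasDerivAt (fun v : ℝ => Real.log (1 + v) - (v - v ^ 2 / 2 + v ^ 3))
        (v ^ 2 * (-2 - 3 * v) / (1 + v)) v := by
    intro v hv
    have h1 := (hasDerivAt_log_one_add (by linarith : (0:ℝ) < 1 + v)).sub
        (((hasDerivAt_id v).sub ((hasDerivAt_pow 2 v).div_const 2)).add (hasDerivAt_pow 3 v))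
    refine h1.congr_deriv ?_
    have h0 : (1:ℝ) + v ≠ 0 := by linarith
    push_cast
    field_simp
    ring
  have hanti : AntitoneOn (fun v : ℝ => Real.log (1 + v) - (v - v ^ 2 / 2 + v ^ 3))
      (Icc (-1/2 : ℝ) 0) := by
    apply antitoneOn_of_deriv_nonpos (convex_Icc _ _)
    · exact fun v hv => (hder v (by linarith [hv.1])).continuousAt.continuousWithinAt
    · intro v hv
      rw [interior_Icc] at hv
      exact (hder v (by linarith [hv.1])).differentiableAt.differentiableWithinAt
    · intro v hv
      rw [interior_Icc] at hv
      rw [(hder v (by linarith [hv.1])).deriv]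
      have h1 : (0:ℝ) < 1 + v := by linarith [hv.1]
      have h2 : -2 - 3 * v ≤ 0 := by linarith [hv.1]
      exact div_nonpos_of_nonpos_of_nonneg
        (mul_nonpos_of_nonneg_of_nonpos (sq_nonneg v) h2) h1.le
  have h := hanti ⟨hu, hu2⟩ (right_mem_Icc.2 (by norm_num)) hu2
  norm_num at h
  linarith

lemma factor_bound {ε y : ℝ} (hε : 0 < ε) (hε2 : ε ≤ 1/2) (hy : -1 ≤ y) :
    Real.exp (ε * y - ε ^ 2 * y ^ 2 / 2 - ε ^ 3 * y ^ 2) ≤ 1 + ε * y := by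
  set u := ε * y with hu
  have hu1 : -(1/2 : ℝ) ≤ u := by
    have : -ε ≤ u := by nlinarith
    linarith
  have hpos : (0:ℝ) < 1 + u := by linarith
  have hsq : ε ^ 2 * y ^ 2 = u ^ 2 := by rw [hu]; ring
  have hcub : ε ^ 3 * y ^ 2 = ε * u ^ 2 := by rw [hu]; ring
  rw [hsq, hcub]
  rcases le_or_gt 0 u with h0 | h0
  · calc Real.exp (u - u ^ 2 / 2 - ε * u ^ 2) ≤ Real.exp (u - u ^ 2 / 2) := by
          apply Real.exp_le_exp.2; nlinarith [sq_nonneg u]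
      _ ≤ Real.exp (Real.log (1 + u)) := Real.exp_le_exp.2 (log_quad_lb h0)
      _ = 1 + u := Real.exp_log hpos
  · have habs : -u ≤ ε := by nlinarith
    have hle : u - u ^ 2 / 2 - ε * u ^ 2 ≤ u - u ^ 2 / 2 + u ^ 3 := by nlinarith [sq_nonneg u]
    calc Real.exp (u - u ^ 2 / 2 - ε * u ^ 2) ≤ Real.exp (u - u ^ 2 / 2 + u ^ 3) :=
          Real.exp_le_exp.2 hle
      _ ≤ Real.exp (Real.log (1 + u)) :=
          Real.exp_le_exp.2 (log_cubic_lb (by linarith) h0.le)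
      _ = 1 + u := Real.exp_log hpos

set_option maxHeartbeats 2000000 in
theorem refined_inequality (π : ℝ → ℝ) (επ δπ : ℝ) (hπ : Assumption1 π επ δπ)
    (n : ℕ) (hn : 1 ≤ n) (x : ℕ → ℝ) (hx : ∀ i, -1 ≤ x i)
    (hS : 0 < S x n)
    (h2 : max 2 (1 / επ) < (S x n) ^ 2 / A2 x n)
    (h3 : (S x n) ^ 3 / (A2 x n) ^ 2 < 1 / 2) :
    1 / (6 * Real.exp 1) * (1 / Real.sqrt (A2 x n)) * π (S x n / A2 x n) *
      Real.exp ((S x n) ^ 2 / (2 * A2 x n)) ≤ K π x n := by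
  obtain ⟨⟨hεπ0, hεπ1⟩, hδπ, hπnn, hπint, hπlb, hπmono⟩ := hπ
  set s := S x n with hs
  set a := A2 x n with ha2
  have ha0 : 0 ≤ a := by rw [ha2]; exact Finset.sum_nonneg fun i _ => sq_nonneg _
  clear_value s a
  have ha : 0 < a := by
    rcases ha0.lt_or_eq with h | h
    · exact h
    · exfalso
      rw [← h, div_zero] at h2
      have := le_max_left (2:ℝ) (1/επ)
      linarith
  have h2a : 2 < s ^ 2 / a := lt_of_le_of_lt (le_max_left _ _) h2
  have h2b : 1 / επ < s ^ 2 / a := lt_of_le_of_lt (le_max_right _ _) h2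
  have key1 : 2 * a < s ^ 2 := by rw [lt_div_iff₀ ha] at h2a; linarith
  have key2 : a < επ * s ^ 2 := by
    rw [div_lt_div_iff₀ hεπ0 ha] at h2b; linarith
  have key3 : 2 * s ^ 3 < a ^ 2 := by
    rw [div_lt_iff₀ (pow_pos ha 2)] at h3; linarith
  set ε0 := s / a with hε0def
  clear_value ε0
  have hε0pos : 0 < ε0 := by rw [hε0def]; exact div_pos hS ha
  have hs2pos : (0:ℝ) < s ^ 2 := pow_pos hS 2
  have h2s : 2 * s < επ * a := by
    nlinarith [mul_lt_mul_of_pos_right key2 ha, key3, hs2pos, hS]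
  have h2ε0 : 2 * ε0 < επ := by
    have he : 2 * ε0 = 2 * s / a := by rw [hε0def]; ring
    rw [he, div_lt_iff₀ ha]
    linarith [h2s]
  have hε0q : 4 * s < a := by nlinarith [key1, key3, hS, ha]
  have hε0lt : ε0 < 1/4 := by rw [hε0def, div_lt_iff₀ ha]; linarith
  set r := Real.sqrt a with hr
  clear_value r
  have hrpos : 0 < r := by rw [hr]; exact Real.sqrt_pos.2 ha
  have hr2 : r ^ 2 = a := by rw [hr]; exact Real.sq_sqrt ha0
  set hh := 1 / (2 * r) with hhdef
  clear_value hh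
  have hhpos : 0 < hh := by rw [hhdef]; exact div_pos one_pos (by linarith)
  have hεa2 : 2 < ε0 ^ 2 * a := by
    have he : ε0 ^ 2 * a = s ^ 2 / a := by rw [hε0def]; field_simp
    rw [he]; exact h2a
  have hεr : 4 / 3 < ε0 * r := by
    have hsq : (ε0 * r)^2 = ε0^2 * a := by rw [mul_pow, hr2]
    nlinarith [mul_pos hε0pos hrpos, hsq, hεa2]
  have hhle : hh ≤ 3 / 8 * ε0 := by
    rw [hhdef, div_le_iff₀ (by linarith : (0:ℝ) < 2*r)]
    nlinarith [hεr, hrpos]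
  set b := ε0 + hh with hbdef
  clear_value b
  have hb2 : b ≤ 11/8 * ε0 := by rw [hbdef]; linarith
  have hbεπ : b < επ := by linarith [hb2, hε0pos, h2ε0]
  have hbhalf : b ≤ 1/2 := by linarith [hb2, hε0lt, hε0pos]
  have hb1 : b < 1 := by linarith
  -- product lower bound
  have hprod : ∀ ε ∈ Ioc ε0 b, Real.exp (ε * s - ε^2 * a / 2 - ε^3 * a)
      ≤ ∏ i ∈ Finset.range n, (1 + ε * x i) := by
    intro ε hε
    have hεpos : 0 < ε := lt_trans hε0pos hε.1
    have hεhalf : ε ≤ 1/2 := le_trans hε.2 hbhalf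
    have hsum : ε * s - ε^2 * a / 2 - ε^3 * a
        = ∑ i ∈ Finset.range n, (ε * x i - ε^2 * (x i)^2 / 2 - ε^3 * (x i)^2) := by
      rw [hs, ha2]
      simp only [S, A2, Finset.mul_sum, Finset.sum_div, ← Finset.sum_sub_distrib]
    rw [hsum, Real.exp_sum]
    exact Finset.prod_le_prod (fun i _ => (Real.exp_pos _).le)
      (fun i _ => factor_bound hεpos hεhalf (hx i))
  -- exponent lower bound
  have hexp : ∀ ε ∈ Ioc ε0 b, s^2/(2*a) - 1459/1024 ≤ ε * s - ε^2 * a / 2 - ε^3 * a := by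
    intro ε hε
    have h4 : ε * s - ε^2 * a / 2 = s^2/(2*a) - a/2 * (ε - ε0)^2 := by
      rw [hε0def]; field_simp; ring
    have h5 : (ε - ε0)^2 ≤ hh^2 := by
      have h51 : 0 ≤ ε - ε0 := by linarith [hε.1.le]
      have h52 : ε - ε0 ≤ hh := by have := hε.2; rw [hbdef] at this; linarith
      nlinarith
    have hhh2 : hh^2 = 1/(4*a) := by
      rw [hhdef, div_pow, mul_pow, hr2]; norm_num
    have h6 : a/2 * (ε - ε0)^2 ≤ 1/8 := by
      have := mul_le_mul_of_nonneg_left h5 (by linarith : (0:ℝ) ≤ a/2)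
      rw [hhh2] at this
      have he : a/2 * (1/(4*a)) = 1/8 := by field_simp; ring
      linarith [he ▸ this]
    have h7 : ε^3 * a ≤ 1331/1024 := by
      have hεpos : 0 < ε := lt_trans hε0pos hε.1
      have t1 : ε^3 ≤ (11/8*ε0)^3 :=
        pow_le_pow_left₀ hεpos.le (le_trans hε.2 hb2) 3
      have t2 : ε^3 * a ≤ (11/8*ε0)^3 * a := mul_le_mul_of_nonneg_right t1 ha0
      have t3 : (11/8*ε0)^3 * a = 1331/512 * (s^3/a^2) := by
        rw [hε0def]; field_simp; ring
      rw [t3] at t2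
      linarith [h3]
    linarith [h4 ▸ (by linarith [h6] : s^2/(2*a) - 1/8 ≤ s^2/(2*a) - a/2*(ε-ε0)^2)]
  -- density lower bound
  have hε0mem : ε0 ∈ Ioo (0:ℝ) επ := ⟨hε0pos, by linarith⟩
  have hπ0nn : 0 ≤ π ε0 := le_trans hδπ.le (hπlb _ hε0mem)
  have hπb : ∀ ε ∈ Ioc ε0 b, 8/11 * π ε0 ≤ π ε := by
    intro ε hε
    have hεmem : ε ∈ Ioo (0:ℝ) επ := ⟨lt_trans hε0pos hε.1, lt_of_le_of_lt hε.2 hbεπ⟩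
    have hm := hπmono hε0mem hεmem hε.1.le
    simp only at hm
    have hεpos : 0 < ε := hεmem.1
    nlinarith [hm, mul_le_mul_of_nonneg_left (le_trans hε.2 hb2) hπ0nn, hεpos]
  -- pointwise constant lower bound
  set m := Real.exp (s^2/(2*a) - 1459/1024) * (8/11 * π ε0) with hmdef
  clear_value m
  have hpt : ∀ ε ∈ Ioc ε0 b, m ≤ (∏ i ∈ Finset.range n, (1 + ε * x i)) * π ε := by
    intro ε hε
    have h1 : Real.exp (s^2/(2*a) - 1459/1024) ≤ ∏ i ∈ Finset.range n, (1 + ε * x i) :=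
      le_trans (Real.exp_le_exp.2 (hexp ε hε)) (hprod ε hε)
    rw [hmdef]
    exact mul_le_mul h1 (hπb ε hε) (by linarith [hπ0nn]) (le_trans (Real.exp_pos _).le h1)
  -- integrability
  have hcont : Continuous fun ε : ℝ => ∏ i ∈ Finset.range n, (1 + ε * x i) := by
    apply continuous_finset_prod
    intro i _
    continuity
  have hint : IntegrableOn (fun ε => (∏ i ∈ Finset.range n, (1 + ε * x i)) * π ε)
      (Icc (0:ℝ) 1) := IntegrableOn.continuousOn_mul hcont.continuousOn hπint isCompact_Icc
  have hnn : ∀ ε ∈ Ioo (0:ℝ) 1, 0 ≤ (∏ i ∈ Finset.range n, (1 + ε * x i)) * π ε := by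
    intro ε hε
    have hp : 0 ≤ ∏ i ∈ Finset.range n, (1 + ε * x i) := by
      apply Finset.prod_nonneg
      intro i _
      have := mul_nonneg hε.1.le (by linarith [hx i] : (0:ℝ) ≤ x i + 1)
      nlinarith [hε.2]
    exact mul_nonneg hp (hπnn ε ⟨hε.1.le, hε.2.le⟩)
  have hIoc_sub : Ioc ε0 b ⊆ Ioo (0:ℝ) 1 :=
    fun y hy => ⟨lt_trans hε0pos hy.1, lt_of_le_of_lt hy.2 hb1⟩
  have step1 : (∫ ε in Ioc ε0 b, (∏ i ∈ Finset.range n, (1 + ε * x i)) * π ε)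
      ≤ ∫ ε in Ioo (0:ℝ) 1, (∏ i ∈ Finset.range n, (1 + ε * x i)) * π ε :=
    setIntegral_mono_set (hint.mono_set Ioo_subset_Icc_self)
      ((ae_restrict_iff' measurableSet_Ioo).2 (Filter.Eventually.of_forall hnn))
      (HasSubset.Subset.eventuallyLE hIoc_sub)
  have step2 : m * (volume (Ioc ε0 b)).toReal
      ≤ ∫ ε in Ioc ε0 b, (∏ i ∈ Finset.range n, (1 + ε * x i)) * π ε :=
    setIntegral_ge_of_const_le_real measurableSet_Ioc (measure_Ioc_lt_top).ne hpt
      (hint.mono_set (subset_trans hIoc_sub Ioo_subset_Icc_self))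
  have hvol : (volume (Ioc ε0 b)).toReal = hh := by
    rw [Real.volume_Ioc, ENNReal.toReal_ofReal (by linarith : (0:ℝ) ≤ b - ε0), hbdef]
    ring
  -- numeric constant
  have hnum : 1/(6 * Real.exp 1) ≤ 4/11 * Real.exp (-(1459/1024 : ℝ)) := by
    have h589 : (589:ℝ)/1024 ≤ Real.exp (-(435/1024 : ℝ)) := by
      have := Real.add_one_le_exp (-(435/1024 : ℝ))
      linarith
    have hprode : Real.exp 1 * Real.exp (-(1459/1024 : ℝ)) = Real.exp (-(435/1024 : ℝ)) := by
      rw [← Real.exp_add]; norm_num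
    rw [div_le_iff₀ (by positivity)]
    nlinarith [h589, hprode, Real.exp_pos (1:ℝ), Real.exp_pos (-(1459/1024:ℝ))]
  -- final
  have hX : (0:ℝ) ≤ 1/r * π ε0 * Real.exp (s^2/(2*a)) := by
    have h1r : (0:ℝ) ≤ 1/r := by positivity
    exact mul_nonneg (mul_nonneg h1r hπ0nn) (Real.exp_pos _).le
  have hfinal : 1/(6*Real.exp 1) * (1/r) * π ε0 * Real.exp (s^2/(2*a)) ≤ m * hh := by
    have hE : Real.exp (s^2/(2*a) - 1459/1024)
        = Real.exp (s^2/(2*a)) * Real.exp (-(1459/1024 : ℝ)) := by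
      rw [← Real.exp_add]; ring_nf
    calc 1/(6*Real.exp 1) * (1/r) * π ε0 * Real.exp (s^2/(2*a))
        = 1/(6*Real.exp 1) * (1/r * π ε0 * Real.exp (s^2/(2*a))) := by ring
      _ ≤ (4/11 * Real.exp (-(1459/1024 : ℝ))) * (1/r * π ε0 * Real.exp (s^2/(2*a))) :=
          mul_le_mul_of_nonneg_right hnum hX
      _ = m * hh := by rw [hmdef, hhdef, hE]; ring
  have hK : m * hh ≤ K π x n := by
    unfold K
    calc m * hh = m * (volume (Ioc ε0 b)).toReal := by rw [hvol]
      _ ≤ _ := step2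
      _ ≤ _ := step1
  linarith [hfinal, hK]
end

section
/- Fix a ∈ (0,1) and let π be the power prior π(ε) = ε^{-a} for ε ∈ (0,1). Let x : ℕ → ℝ satisfy x_i ≥ -1 for all i. If Σ_{i=1}^∞ x_i² = ∞ and limsup_{n→∞} S_n/√((1-a)·A_n²·ln(A_n²)) > 1, then limsup_{n→∞} K_n^π = ∞. -/
set_option maxHeartbeats 1000000


open MeasureTheory Filter Set

lemma log_key {ε : ℝ} (hε0 : 0 < ε) (hε1 : ε < 1) {y : ℝ} (hy : -ε ≤ y) :
    y - y ^ 2 / (2 * (1 - ε)) ≤ Real.log (1 + y) := by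
  set f : ℝ → ℝ := fun t => Real.log (1 + t) - (t - t ^ 2 / (2 * (1 - ε))) with hf
  have hd : ∀ t : ℝ, -1 < t → HasDerivAt f (t * (t + ε) / ((1 + t) * (1 - ε))) t := by
    intro t ht
    have h1 : (1 : ℝ) + t ≠ 0 := by linarith
    have hlog : HasDerivAt (fun t : ℝ => Real.log (1 + t)) (1 / (1 + t)) t := by
      simpa using ((hasDerivAt_id t).const_add 1).log h1
    have hpoly : HasDerivAt (fun t : ℝ => t - t ^ 2 / (2 * (1 - ε)))
        (1 - 2 * t / (2 * (1 - ε))) t := by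
      have := ((hasDerivAt_pow 2 t).div_const (2 * (1 - ε)))
      have h2 : HasDerivAt (fun t : ℝ => id t - t ^ 2 / (2 * (1 - ε))) _ t := (hasDerivAt_id t).sub this
      simpa using h2
    have : HasDerivAt (fun t : ℝ => Real.log (1 + t) - (t - t ^ 2 / (2 * (1 - ε)))) _ t :=
      hlog.sub hpoly
    have h2 : (1 : ℝ) - ε ≠ 0 := by linarith
    convert this using 1
    field_simp
    ring
  have hcont : ∀ s : Set ℝ, s ⊆ Ioi (-1 : ℝ) → ContinuousOn f s := by
    intro s hs
    intro t ht
    exact ((hd t (hs ht)).continuousAt).continuousWithinAt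
  have hmono : MonotoneOn f (Ici (0 : ℝ)) := by
    refine monotoneOn_of_deriv_nonneg (convex_Ici 0) (hcont _ ?_) ?_ ?_
    · intro t ht; simp at ht ⊢; linarith
    · intro t ht
      simp only [interior_Ici, mem_Ioi] at ht
      exact (hd t (by linarith)).differentiableAt.differentiableWithinAt
    · intro t ht
      simp only [interior_Ici, mem_Ioi] at ht
      rw [(hd t (by linarith)).deriv]
      apply div_nonneg <;> nlinarith
  have hanti : AntitoneOn f (Icc (-ε) 0) := by
    refine antitoneOn_of_deriv_nonpos (convex_Icc _ _) (hcont _ ?_) ?_ ?_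
    · intro t ht; simp at ht ⊢; linarith [ht.1]
    · intro t ht
      rw [interior_Icc] at ht
      exact (hd t (by linarith [ht.1])).differentiableAt.differentiableWithinAt
    · intro t ht
      rw [interior_Icc] at ht
      rw [(hd t (by linarith [ht.1])).deriv]
      apply div_nonpos_of_nonpos_of_nonneg
      · nlinarith [ht.1, ht.2]
      · nlinarith [ht.1, ht.2]
  have hf0 : f 0 = 0 := by simp [hf]
  have : 0 ≤ f y := by
    rcases le_or_gt 0 y with h | h
    · have := hmono (mem_Ici.2 le_rfl) (mem_Ici.2 h) h
      rwa [hf0] at this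
    · have := hanti (mem_Icc.2 ⟨hy, h.le⟩) (mem_Icc.2 ⟨by linarith, le_rfl⟩) h.le
      rwa [hf0] at this
  simp only [hf] at this
  linarith

lemma prod_key {ε : ℝ} (hε0 : 0 < ε) (hε1 : ε < 1) {x : ℕ → ℝ} (hx : ∀ i, -1 ≤ x i) (n : ℕ) :
    Real.exp (ε * S x n - ε ^ 2 * A2 x n / (2 * (1 - ε))) ≤
      ∏ i ∈ Finset.range n, (1 + ε * x i) := by
  have hterm : ∀ i, Real.exp (ε * x i - (ε * x i) ^ 2 / (2 * (1 - ε))) ≤ 1 + ε * x i := by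
    intro i
    have hy : -ε ≤ ε * x i := by nlinarith [hx i]
    have hpos : 0 < 1 + ε * x i := by linarith
    calc Real.exp (ε * x i - (ε * x i) ^ 2 / (2 * (1 - ε)))
        ≤ Real.exp (Real.log (1 + ε * x i)) := Real.exp_le_exp.2 (log_key hε0 hε1 hy)
      _ = 1 + ε * x i := Real.exp_log hpos
  have hsum : ε * S x n - ε ^ 2 * A2 x n / (2 * (1 - ε)) =
      ∑ i ∈ Finset.range n, (ε * x i - (ε * x i) ^ 2 / (2 * (1 - ε))) := by
    simp only [S, A2, Finset.mul_sum, Finset.sum_sub_distrib, ← Finset.sum_div, mul_pow]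
  rw [hsum, Real.exp_sum]
  exact Finset.prod_le_prod (fun i _ => (Real.exp_pos _).le) (fun i _ => hterm i)

lemma K_lb {a : ℝ} (ha0 : 0 < a) (ha1 : a < 1) {x : ℕ → ℝ} (hx : ∀ i, -1 ≤ x i) (n : ℕ)
    {e₀ e₁ m : ℝ} (h0 : 0 < e₀) (h01 : e₀ < e₁) (h1 : e₁ < 1)
    (hm : ∀ ε ∈ Icc e₀ e₁, m ≤ (∏ i ∈ Finset.range n, (1 + ε * x i)) * ε ^ (-a)) :
    m * (e₁ - e₀) ≤ K (fun ε => ε ^ (-a)) x n := by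
  set F : ℝ → ℝ := fun ε => (∏ i ∈ Finset.range n, (1 + ε * x i)) * ε ^ (-a) with hF
  have hFpos : ∀ ε ∈ Ioo (0 : ℝ) 1, 0 ≤ F ε := by
    intro ε hε
    apply mul_nonneg
    · apply Finset.prod_nonneg
      intro i _
      nlinarith [hx i, hε.1, hε.2]
    · exact (Real.rpow_pos_of_pos hε.1 _).le
  have hcont : ContinuousOn F (Ioo (0 : ℝ) 1) := by
    apply ContinuousOn.mul
    · exact (continuous_finset_prod _ fun i _ => by continuity).continuousOn
    · intro ε hε
      exact (Real.continuousAt_rpow_const ε (-a) (Or.inl (ne_of_gt hε.1))).continuousWithinAt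
  have hint : IntegrableOn F (Ioo (0 : ℝ) 1) := by
    set B : ℝ := ∏ i ∈ Finset.range n, (1 + |x i|) with hB
    have hB0 : 0 ≤ B := Finset.prod_nonneg fun i _ => by positivity
    have hg : IntegrableOn (fun ε : ℝ => B * ε ^ (-a)) (Ioo (0 : ℝ) 1) :=
      ((intervalIntegral.integrableOn_Ioo_rpow_iff zero_lt_one).2 (by linarith)).const_mul B
    refine Integrable.mono hg (hcont.aestronglyMeasurable measurableSet_Ioo) ?_
    rw [ae_restrict_iff' measurableSet_Ioo]
    filter_upwards with ε hε
    have h1 : ‖F ε‖ = F ε := Real.norm_of_nonneg (hFpos ε hε)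
    have h2 : ∏ i ∈ Finset.range n, (1 + ε * x i) ≤ B := by
      apply Finset.prod_le_prod
      · intro i _; nlinarith [hx i, hε.1, hε.2]
      · intro i _
        have : ε * x i ≤ |x i| := by
          calc ε * x i ≤ ε * |x i| := by nlinarith [le_abs_self (x i), hε.1]
            _ ≤ 1 * |x i| := by nlinarith [abs_nonneg (x i), hε.2]
            _ = |x i| := one_mul _
        linarith
    rw [h1]
    have : F ε ≤ B * ε ^ (-a) :=
      mul_le_mul_of_nonneg_right h2 (Real.rpow_pos_of_pos hε.1 _).le
    calc F ε ≤ B * ε ^ (-a) := this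
      _ ≤ ‖B * ε ^ (-a)‖ := le_abs_self _
  have hsub : Icc e₀ e₁ ⊆ Ioo (0 : ℝ) 1 := fun t ht => ⟨lt_of_lt_of_le h0 ht.1, lt_of_le_of_lt ht.2 h1⟩
  have step1 : m * (e₁ - e₀) ≤ ∫ ε in Icc e₀ e₁, F ε := by
    have := setIntegral_ge_of_const_le (μ := volume) measurableSet_Icc
      (by simp [Real.volume_Icc]) hm (hint.mono_set hsub)
    calc m * (e₁ - e₀) = volume.real (Icc e₀ e₁) • m := by
          rw [Real.volume_real_Icc_of_le h01.le, smul_eq_mul, mul_comm]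
      _ ≤ _ := this
  have step2 : ∫ ε in Icc e₀ e₁, F ε ≤ ∫ ε in Ioo (0:ℝ) 1, F ε := by
    apply setIntegral_mono_set hint
    · exact (ae_restrict_iff' measurableSet_Ioo).2 (Filter.Eventually.of_forall hFpos)
    · exact HasSubset.Subset.eventuallyLE hsub
  calc m * (e₁ - e₀) ≤ _ := step1
    _ ≤ _ := step2

lemma per_n {a d c β : ℝ} (ha0 : 0 < a) (ha1 : a < 1) (hd0 : 0 < d) (hd1 : d ≤ 1)
    (hc_def : c = 1 + d) (hβ_def : β = 1 + d / 8)
    {x : ℕ → ℝ} (hx : ∀ i, -1 ≤ x i) (n : ℕ)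
    (hA1 : Real.exp 1 ≤ A2 x n)
    (hsm : Real.sqrt ((1 - a) * Real.log (A2 x n) / A2 x n) < d / 16)
    (hSn : c ≤ S x n / Real.sqrt ((1 - a) * A2 x n * Real.log (A2 x n))) :
    d / 16 * (1 - a) ^ ((1 - a) / 2) * A2 x n ^ ((1 - a) * d / 2) ≤
      K (fun ε => ε ^ (-a)) x n := by
  set A : ℝ := A2 x n with hA_def
  set L : ℝ := Real.log A with hL_def
  have hApos : 0 < A := lt_of_lt_of_le (Real.exp_pos 1) hA1
  have hL1 : 1 ≤ L := (Real.le_log_iff_exp_le hApos).2 hA1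
  have hLpos : 0 < L := lt_of_lt_of_le one_pos hL1
  have hβ1 : 1 < β := by rw [hβ_def]; linarith
  have hβ2 : β ≤ 2 := by rw [hβ_def]; linarith
  set e₀ : ℝ := Real.sqrt ((1 - a) * L / A) with he₀_def
  set e₁ : ℝ := β * e₀ with he₁_def
  have hq : 0 < (1 - a) * L / A := div_pos (mul_pos (by linarith) hLpos) hApos
  have he₀ : 0 < e₀ := Real.sqrt_pos.2 hq
  have he₀sq : e₀ ^ 2 = (1 - a) * L / A := Real.sq_sqrt hq.le
  have he₀ub : e₀ < d / 16 := hsm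
  have he₁ub : e₁ ≤ d / 8 := by
    rw [he₁_def]
    have := mul_le_mul hβ2 he₀ub.le he₀.le (by norm_num : (0:ℝ) ≤ 2)
    linarith
  have he₁lt1 : e₁ < 1 := by linarith
  have h01 : e₀ < e₁ := by rw [he₁_def]; exact lt_mul_left he₀ hβ1
  have hsqrtpos : 0 < Real.sqrt ((1 - a) * A * L) :=
    Real.sqrt_pos.2 (mul_pos (mul_pos (by linarith) hApos) hLpos)
  have hSge : c * Real.sqrt ((1 - a) * A * L) ≤ S x n :=
    (le_div_iff₀ hsqrtpos).1 hSn
  have hSpos : 0 ≤ S x n := by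
    have := mul_pos (show (0:ℝ) < c by rw [hc_def]; linarith) hsqrtpos
    linarith
  have hkey : e₀ * Real.sqrt ((1 - a) * A * L) = (1 - a) * L := by
    rw [he₀_def, ← Real.sqrt_mul hq.le]
    rw [show (1 - a) * L / A * ((1 - a) * A * L) = ((1 - a) * L) ^ 2 by
      field_simp]
    exact Real.sqrt_sq (mul_nonneg (by linarith) hLpos.le)
  set E : ℝ := (1 - a) * (1 / 2 + d / 2) * L with hE_def
  set m : ℝ := Real.exp E * e₁ ^ (-a) with hm_def
  have hm : ∀ ε ∈ Icc e₀ e₁,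
      m ≤ (∏ i ∈ Finset.range n, (1 + ε * x i)) * ε ^ (-a) := by
    rintro ε ⟨hεl, hεu⟩
    have hε0 : 0 < ε := lt_of_lt_of_le he₀ hεl
    have hε1 : ε < 1 := lt_of_le_of_lt hεu he₁lt1
    have hr : e₁ ^ (-a) ≤ ε ^ (-a) :=
      Real.rpow_le_rpow_of_nonpos hε0 hεu (by linarith)
    have hexp : E ≤ ε * S x n - ε ^ 2 * A / (2 * (1 - ε)) := by
      have h1 : c * ((1 - a) * L) ≤ ε * S x n := by
        have e1 : c * ((1 - a) * L) = e₀ * (c * Real.sqrt ((1 - a) * A * L)) := by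
          rw [← hkey]; ring
        rw [e1]
        calc e₀ * (c * Real.sqrt ((1 - a) * A * L)) ≤ e₀ * S x n :=
              mul_le_mul_of_nonneg_left hSge he₀.le
          _ ≤ ε * S x n := mul_le_mul_of_nonneg_right hεl hSpos
      have he₁sq : e₁ ^ 2 * A = β ^ 2 * ((1 - a) * L) := by
        rw [he₁_def, show (β * e₀) ^ 2 = β ^ 2 * e₀ ^ 2 by ring, he₀sq]
        field_simp
      have hP : 0 ≤ (1 - a) * L := mul_nonneg (by linarith) hLpos.le
      have h2 : ε ^ 2 * A / (2 * (1 - ε)) ≤ β ^ 2 * ((1 - a) * L) / (2 * (1 - d / 8)) := by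
        apply div_le_div₀ (mul_nonneg (sq_nonneg β) hP) _ (by linarith) (by linarith)
        rw [← he₁sq]
        exact mul_le_mul_of_nonneg_right (pow_le_pow_left₀ hε0.le hεu 2) hApos.le
      have hscal : β ^ 2 ≤ (c - (1 / 2 + d / 2)) * (2 * (1 - d / 8)) := by
        rw [hβ_def, hc_def]; nlinarith [hd0, hd1]
      have h3 : β ^ 2 * ((1 - a) * L) / (2 * (1 - d / 8)) ≤
          (c - (1 / 2 + d / 2)) * ((1 - a) * L) := by
        rw [div_le_iff₀ (by linarith)]
        have := mul_le_mul_of_nonneg_right hscal hP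
        linarith
      have hE' : E = (1 / 2 + d / 2) * ((1 - a) * L) := by rw [hE_def]; ring
      linarith
    calc m = Real.exp E * e₁ ^ (-a) := hm_def
      _ ≤ Real.exp (ε * S x n - ε ^ 2 * A / (2 * (1 - ε))) * ε ^ (-a) :=
          mul_le_mul (Real.exp_le_exp.2 hexp) hr
            (Real.rpow_pos_of_pos (lt_trans he₀ h01) _).le (Real.exp_pos _).le
      _ ≤ (∏ i ∈ Finset.range n, (1 + ε * x i)) * ε ^ (-a) :=
          mul_le_mul_of_nonneg_right (prod_key hε0 hε1 hx n)
            (Real.rpow_pos_of_pos hε0 _).le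
  have hKn : m * (e₁ - e₀) ≤ K (fun ε => ε ^ (-a)) x n :=
    K_lb ha0 ha1 hx n he₀ h01 he₁lt1 hm
  have hdiff : e₁ - e₀ = d / 8 * e₀ := by rw [he₁_def, hβ_def]; ring
  have hb2 : (1 / 2 : ℝ) ≤ (2 : ℝ) ^ (-a) := by
    have h := Real.rpow_le_rpow_of_exponent_le (by norm_num : (1:ℝ) ≤ 2)
      (by linarith : -1 ≤ -a)
    rw [Real.rpow_neg_one] at h
    linarith [h]
  have h2' : (1 / 2) * e₀ ^ (-a) ≤ e₁ ^ (-a) := by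
    rw [he₁_def, Real.mul_rpow (by linarith) he₀.le]
    have hb1 : (2 : ℝ) ^ (-a) ≤ β ^ (-a) :=
      Real.rpow_le_rpow_of_nonpos (by linarith) hβ2 (by linarith)
    nlinarith [Real.rpow_pos_of_pos he₀ (-a), hb1, hb2]
  have h3' : Real.exp E = A ^ ((1 - a) * (1 / 2 + d / 2)) := by
    rw [Real.rpow_def_of_pos hApos]
    congr 1
    rw [hE_def, hL_def]; ring
  have h6 : e₀ * e₀ ^ (-a) = e₀ ^ (1 - a) := by
    rw [show (1 : ℝ) - a = 1 + (-a) by ring, Real.rpow_add he₀, Real.rpow_one]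
  have h4 : (1 - a) ^ ((1 - a) / 2) * A ^ (-((1 - a) / 2)) ≤ e₀ ^ (1 - a) := by
    have hle : Real.sqrt ((1 - a) / A) ≤ e₀ := by
      apply Real.sqrt_le_sqrt
      apply (div_le_div_iff_of_pos_right hApos).2
      nlinarith [hL1]
    have hnum : (0:ℝ) ≤ (1 - a) / A := div_nonneg (by linarith) hApos.le
    have heq : Real.sqrt ((1 - a) / A) ^ (1 - a) =
        (1 - a) ^ ((1 - a) / 2) * A ^ (-((1 - a) / 2)) := by
      rw [Real.sqrt_eq_rpow, ← Real.rpow_mul hnum,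
        show 1 / 2 * (1 - a) = (1 - a) / 2 by ring,
        Real.div_rpow (by linarith) hApos.le,
        Real.rpow_neg hApos.le, div_eq_mul_inv]
    rw [← heq]
    exact Real.rpow_le_rpow (Real.sqrt_nonneg _) hle (by linarith)
  have h7 : A ^ ((1 - a) * (1 / 2 + d / 2)) * A ^ (-((1 - a) / 2)) = A ^ ((1 - a) * d / 2) := by
    rw [← Real.rpow_add hApos]
    congr 1
    ring
  have hfin : d / 16 * (1 - a) ^ ((1 - a) / 2) * A ^ ((1 - a) * d / 2) ≤ m * (e₁ - e₀) := by
    have hExp := Real.exp_pos E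
    calc d / 16 * (1 - a) ^ ((1 - a) / 2) * A ^ ((1 - a) * d / 2)
        = d / 16 * ((1 - a) ^ ((1 - a) / 2) * A ^ (-((1 - a) / 2))) *
          (A ^ ((1 - a) * (1 / 2 + d / 2))) := by rw [← h7]; ring
      _ ≤ d / 16 * e₀ ^ (1 - a) * (A ^ ((1 - a) * (1 / 2 + d / 2))) := by
          apply mul_le_mul_of_nonneg_right _ (Real.rpow_pos_of_pos hApos _).le
          apply mul_le_mul_of_nonneg_left h4 (by linarith)
      _ = Real.exp E * ((1 / 2) * e₀ ^ (-a)) * (d / 8 * e₀) := by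
          rw [← h3', ← h6]; ring
      _ ≤ Real.exp E * e₁ ^ (-a) * (d / 8 * e₀) := by
          apply mul_le_mul_of_nonneg_right _ (by nlinarith [he₀.le])
          exact mul_le_mul_of_nonneg_left h2' hExp.le
      _ = m * (e₁ - e₀) := by rw [hm_def, hdiff]
  linarith

theorem power_prior_rate (a : ℝ) (ha : a ∈ Set.Ioo (0 : ℝ) 1)
    (x : ℕ → ℝ) (hx : ∀ i, -1 ≤ x i)
    (hA : Filter.Tendsto (A2 x) Filter.atTop Filter.atTop)
    (hls : 1 < Filter.limsup
      (fun n => ((S x n / Real.sqrt ((1 - a) * A2 x n * Real.log (A2 x n)) : ℝ) : EReal))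
      Filter.atTop) :
    Filter.limsup (fun n => ((K (fun ε => ε ^ (-a)) x n : ℝ) : EReal)) Filter.atTop = ⊤ := by
  obtain ⟨ha0, ha1⟩ := ha
  obtain ⟨c₀, hc₀1, hc₀lt⟩ := EReal.exists_between_coe_real hls
  have hc₀1' : (1 : ℝ) < c₀ := by exact_mod_cast hc₀1
  set d : ℝ := min (c₀ - 1) 1 with hd_def
  have hd0 : 0 < d := lt_min (by linarith) one_pos
  have hd1 : d ≤ 1 := min_le_right _ _
  set c : ℝ := 1 + d with hc_def
  have hcc₀ : c ≤ c₀ := by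
    have := min_le_left (c₀ - 1) 1
    rw [hc_def]; linarith [hd_def ▸ this]
  have hfreq : ∃ᶠ n in atTop,
      c ≤ S x n / Real.sqrt ((1 - a) * A2 x n * Real.log (A2 x n)) := by
    have h := Filter.frequently_lt_of_lt_limsup (by isBoundedDefault) hc₀lt
    refine h.mono fun n hn => ?_
    have : (c₀ : ℝ) < S x n / Real.sqrt ((1 - a) * A2 x n * Real.log (A2 x n)) := by
      exact_mod_cast hn
    linarith
  set p : ℝ := (1 - a) * d / 2 with hp_def
  have hp0 : 0 < p := by
    rw [hp_def]
    have : 0 < (1 - a) * d := mul_pos (by linarith) hd0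
    linarith
  set C₀ : ℝ := d / 16 * (1 - a) ^ ((1 - a) / 2) with hC₀_def
  have hC₀0 : 0 < C₀ := by
    rw [hC₀_def]
    exact mul_pos (by linarith)
      (Real.rpow_pos_of_pos (show (0:ℝ) < 1 - a by linarith) ((1 - a) / 2))
  have hE1 : ∀ᶠ n in atTop, Real.exp 1 ≤ A2 x n := hA.eventually_ge_atTop _
  have hsmall : ∀ᶠ n in atTop,
      Real.sqrt ((1 - a) * Real.log (A2 x n) / A2 x n) < d / 16 := by
    have h0 : Tendsto (fun t : ℝ => Real.log t / t) atTop (nhds 0) :=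
      Real.isLittleO_log_id_atTop.tendsto_div_nhds_zero
    have h1 : Tendsto (fun t : ℝ => (1 - a) * (Real.log t / t)) atTop (nhds 0) := by
      simpa using h0.const_mul (1 - a)
    have h2 : Tendsto (fun n => (1 - a) * Real.log (A2 x n) / A2 x n) atTop (nhds 0) := by
      simpa [mul_div_assoc, Function.comp_def] using h1.comp hA
    have h3 : Tendsto (fun n => Real.sqrt ((1 - a) * Real.log (A2 x n) / A2 x n))
        atTop (nhds 0) := by
      have := (Real.continuous_sqrt.tendsto 0).comp h2
      simpa [Function.comp_def] using this
    exact h3.eventually_lt_const (by positivity)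
  have key : ∀ M : ℝ, ∃ᶠ n in atTop, M ≤ K (fun ε => ε ^ (-a)) x n := by
    intro M
    have hMB : ∀ᶠ n in atTop, M ≤ C₀ * A2 x n ^ p := by
      have h1 : Tendsto (fun t : ℝ => t ^ p) atTop atTop := tendsto_rpow_atTop hp0
      have h2 : Tendsto (fun n => C₀ * A2 x n ^ p) atTop atTop :=
        (h1.comp hA).const_mul_atTop hC₀0
      exact h2.eventually_ge_atTop M
    refine (((hE1.and hsmall).and hMB).and_frequently hfreq).mono ?_
    rintro n ⟨⟨⟨hA1, hsm⟩, hMn⟩, hSn⟩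
    have hper := per_n ha0 ha1 hd0 hd1 hc_def rfl hx n hA1 hsm hSn
    rw [hC₀_def, hp_def] at hMn
    linarith
  rw [EReal.eq_top_iff_forall_lt]
  intro y
  have h1 : ((y + 1 : ℝ) : EReal) ≤
      Filter.limsup (fun n => ((K (fun ε => ε ^ (-a)) x n : ℝ) : EReal)) atTop := by
    apply Filter.le_limsup_of_frequently_le _ (by isBoundedDefault)
    exact (key (y + 1)).mono fun n h => EReal.coe_le_coe_iff.2 h
  refine lt_of_lt_of_le ?_ h1
  exact_mod_cast (by linarith : y < y + 1)
end

section
/- Let ε_0 ∈ (0, e^{-e}) and let π be the prior defined by π(ε) = 1/(ε·ln(1/ε)·(ln ln(1/ε))²) for ε ∈ (0,ε_0) and π(ε) = 0 for ε ∈ [ε_0,1). Let x : ℕ → ℝ satisfy x_i ≥ -1 for all i. If Σ_{i=1}^∞ x_i² = ∞ and limsup_{n→∞} S_n/√(2·A_n²·ln ln(A_n²)) > 1, then limsup_{n→∞} K_n^π = ∞. -/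
open MeasureTheory Filter Set

lemma log_ge_quad {t : ℝ} (ht : 0 ≤ t) : t - t^2/2 ≤ Real.log (1+t) := by
  have hd : ∀ u : ℝ, 0 < u → HasDerivAt (fun u : ℝ => Real.log (1+u) - (u - u^2/2))
      (1/(1+u) - (1 - u)) u := by
    intro u hu
    have hne : (1:ℝ) + u ≠ 0 := by nlinarith
    have := ((hasDerivAt_id u).const_add 1).log (by simpa using hne)
    have h2 := this.sub ((hasDerivAt_id u).sub (((hasDerivAt_id u).pow 2).div_const 2))
    refine h2.congr_deriv ?_
    simp
  have key : MonotoneOn (fun u : ℝ => Real.log (1+u) - (u - u^2/2)) (Ici 0) := by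
    apply monotoneOn_of_deriv_nonneg (convex_Ici 0)
    · apply ContinuousOn.sub
      · apply ContinuousOn.log (by fun_prop)
        intro u hu; simp at hu; nlinarith
      · fun_prop
    · intro u hu
      simp only [interior_Ici, mem_Ioi] at hu
      exact (hd u hu).differentiableAt.differentiableWithinAt
    · intro u hu
      simp only [interior_Ici, mem_Ioi] at hu
      rw [(hd u hu).deriv]
      have : (1-u) ≤ 1/(1+u) := by rw [le_div_iff₀ (by nlinarith)]; nlinarith
      linarith
  have := key (self_mem_Ici) ht ht
  simpa using this

lemma log_one_sub_ge {s : ℝ} (h0 : 0 ≤ s) (h1 : s ≤ 1/2) :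
    -s - s^2/2 - s^3 ≤ Real.log (1-s) := by
  have hd : ∀ u : ℝ, u ∈ Ioo (0:ℝ) (1/2) → HasDerivAt
      (fun u : ℝ => Real.log (1-u) + (u + u^2/2 + u^3))
      (-(1/(1-u)) + (1 + u + 3*u^2)) u := by
    intro u hu
    obtain ⟨hu0, hu2⟩ := hu
    have hne : (1:ℝ) - u ≠ 0 := by nlinarith
    have hlog : HasDerivAt (fun u : ℝ => Real.log (1-u)) (-(1/(1-u))) u := by
      have := ((hasDerivAt_id u).const_sub 1).log (by simpa using hne)
      refine this.congr_deriv ?_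
      simp [neg_div]
    have h2 := hlog.add (((hasDerivAt_id u).add (((hasDerivAt_id u).pow 2).div_const 2)).add
      ((hasDerivAt_id u).pow 3))
    refine h2.congr_deriv ?_
    simp
  have key : MonotoneOn (fun u : ℝ => Real.log (1-u) + (u + u^2/2 + u^3)) (Icc 0 (1/2)) := by
    apply monotoneOn_of_deriv_nonneg (convex_Icc 0 (1/2))
    · apply ContinuousOn.add
      · apply ContinuousOn.log (by fun_prop)
        intro u hu; simp at hu; nlinarith [hu.2]
      · fun_prop
    · intro u hu
      rw [interior_Icc] at hu
      exact (hd u hu).differentiableAt.differentiableWithinAt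
    · intro u hu
      rw [interior_Icc] at hu
      rw [(hd u hu).deriv]
      obtain ⟨hu0, hu2⟩ := hu
      have : 1/(1-u) ≤ 1 + u + 3*u^2 := by
        rw [div_le_iff₀ (by nlinarith)]; nlinarith
      linarith
  have := key (left_mem_Icc.2 (by norm_num)) (mem_Icc.2 ⟨h0, h1⟩) h0
  simp only [sub_zero, Real.log_one] at this
  nlinarith [this]


lemma log_term_ge {y ε : ℝ} (hy : -1 ≤ y) (hε : 0 < ε) (hε2 : ε ≤ 1/2) :
    ε*y - (ε*y)^2/2 - ε^3*y^2 ≤ Real.log (1+ε*y) := by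
  rcases le_or_gt 0 y with h | h
  · have := log_ge_quad (t := ε*y) (by positivity)
    nlinarith [sq_nonneg (ε*y), pow_nonneg hε.le 3, sq_nonneg y]
  · have h0 : 0 ≤ ε*(-y) := by nlinarith
    have h1 : ε*(-y) ≤ 1/2 := by nlinarith
    have := log_one_sub_ge h0 h1
    have he : 1 - ε*(-y) = 1 + ε*y := by ring
    rw [he] at this
    have hy1 : -y ≤ 1 := by linarith
    have hcube : (ε*(-y))^3 ≤ ε^3*y^2 := by
      have : (ε*(-y))^3 = ε^3 * (-y)^3 := by ring
      rw [this]
      have h3 : (-y)^3 ≤ y^2 := by nlinarith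
      nlinarith [pow_pos hε 3]
    nlinarith [this]

lemma prod_ge_exp (x : ℕ → ℝ) (hx : ∀ i, -1 ≤ x i) (n : ℕ) {ε : ℝ}
    (hε : 0 < ε) (hε2 : ε ≤ 1/2) :
    Real.exp (ε * S x n - ε^2 * A2 x n / 2 - ε^3 * A2 x n)
      ≤ ∏ i ∈ Finset.range n, (1 + ε * x i) := by
  have hpos : ∀ i, (0:ℝ) < 1 + ε * x i := by
    intro i; nlinarith [hx i]
  have hprod : ∏ i ∈ Finset.range n, (1 + ε * x i)
      = Real.exp (∑ i ∈ Finset.range n, Real.log (1 + ε * x i)) := by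
    rw [Real.exp_sum]
    exact Finset.prod_congr rfl fun i _ => (Real.exp_log (hpos i)).symm
  rw [hprod, Real.exp_le_exp]
  have : ε * S x n - ε^2 * A2 x n / 2 - ε^3 * A2 x n
      = ∑ i ∈ Finset.range n, (ε*(x i) - (ε*(x i))^2/2 - ε^3*(x i)^2) := by
    simp only [S, A2, Finset.mul_sum, Finset.sum_div, ← Finset.sum_sub_distrib]
    congr 1; ext i; ring
  rw [this]
  exact Finset.sum_le_sum fun i _ => log_term_ge (hx i) hε hε2


variable (ε₀ : ℝ)

noncomputable def pr (ε₀ : ℝ) : ℝ → ℝ := fun ε => if ε < ε₀ then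
  1 / (ε * Real.log (1 / ε) * (Real.log (Real.log (1 / ε))) ^ 2) else 0

lemma pr_deriv (hε₀ : ε₀ ∈ Set.Ioo 0 (Real.exp (-Real.exp 1))) :
    ∀ ε ∈ Ioo (0:ℝ) ε₀, HasDerivAt (fun ε => (Real.log (Real.log (1/ε)))⁻¹)
      (1 / (ε * Real.log (1 / ε) * (Real.log (Real.log (1 / ε))) ^ 2)) ε := by
  intro ε hε
  obtain ⟨hε0, hεe⟩ := hε
  have hεlt : ε < Real.exp (-Real.exp 1) := lt_trans hεe hε₀.2
  have hu : Real.exp 1 < Real.log (1/ε) := by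
    rw [one_div, Real.log_inv]
    have := Real.log_lt_log hε0 hεlt
    rw [Real.log_exp] at this
    linarith
  have hu0 : (0:ℝ) < Real.log (1/ε) := lt_trans (by positivity) hu
  have hv : (1:ℝ) < Real.log (Real.log (1/ε)) := by
    calc (1:ℝ) = Real.log (Real.exp 1) := (Real.log_exp 1).symm
    _ < _ := Real.log_lt_log (Real.exp_pos 1) hu
  have hv0 : (0:ℝ) < Real.log (Real.log (1/ε)) := lt_trans one_pos hv
  -- build derivative
  have h1 : HasDerivAt (fun ε : ℝ => 1/ε) (-(ε^2)⁻¹) ε := by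
    simpa [one_div] using hasDerivAt_inv (ne_of_gt hε0)
  have h2 : HasDerivAt (fun ε : ℝ => Real.log (1/ε)) ((-(ε^2)⁻¹) / (1/ε)) ε :=
    h1.log (by positivity)
  have h3 : HasDerivAt (fun ε : ℝ => Real.log (Real.log (1/ε)))
      (((-(ε^2)⁻¹) / (1/ε)) / (Real.log (1/ε))) ε := h2.log (ne_of_gt hu0)
  have h4 := h3.inv (ne_of_gt hv0)
  refine h4.congr_deriv ?_
  field_simp

lemma F_cont (hε₀ : ε₀ ∈ Set.Ioo 0 (Real.exp (-Real.exp 1))) :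
    ContinuousOn (fun ε => (Real.log (Real.log (1/ε)))⁻¹) (Icc 0 ε₀) := by
  intro ε hε
  rcases eq_or_lt_of_le hε.1 with h0 | h0
  · -- ε = 0
    rw [← h0]
    apply ContinuousWithinAt.mono _ (Icc_subset_Ici_self : Icc (0:ℝ) ε₀ ⊆ Ici 0)
    rw [← continuousWithinAt_diff_self]
    have hset : (Ici (0:ℝ) \ {0}) = Ioi 0 := by
      ext y; simp [mem_diff, mem_Ioi, lt_iff_le_and_ne, eq_comm, and_comm]
    unfold ContinuousWithinAt
    rw [hset]
    have hF0 : (fun ε : ℝ => (Real.log (Real.log (1/ε)))⁻¹) 0 = 0 := by norm_num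
    rw [hF0]
    have t1 : Tendsto (fun x:ℝ => 1/x) (nhdsWithin 0 (Ioi 0)) atTop := by
      simpa [one_div] using tendsto_inv_nhdsGT_zero
    have t2 := Real.tendsto_log_atTop.comp t1
    have t3 := Real.tendsto_log_atTop.comp t2
    have t4 := tendsto_inv_atTop_zero.comp t3
    exact t4
  · -- ε > 0
    apply ContinuousAt.continuousWithinAt
    have hεe : ε < Real.exp (-Real.exp 1) := lt_of_le_of_lt hε.2 hε₀.2
    have hu : Real.exp 1 < Real.log (1/ε) := by
      rw [one_div, Real.log_inv]
      have := Real.log_lt_log h0 hεe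
      rw [Real.log_exp] at this
      linarith
    have hu0 : (0:ℝ) < Real.log (1/ε) := lt_trans (by positivity) hu
    have hv0 : (0:ℝ) < Real.log (Real.log (1/ε)) := by
      calc (0:ℝ) < Real.log (Real.exp 1) := by rw [Real.log_exp]; norm_num
      _ < _ := Real.log_lt_log (Real.exp_pos 1) hu
    have c1 : ContinuousAt (fun x:ℝ => 1/x) ε :=
      ContinuousAt.div continuousAt_const continuousAt_id (ne_of_gt h0)
    have c2 : ContinuousAt (fun x:ℝ => Real.log (1/x)) ε :=
      Filter.Tendsto.comp (Real.continuousAt_log (by positivity)) c1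
    have c3 : ContinuousAt (fun x:ℝ => Real.log (Real.log (1/x))) ε :=
      Filter.Tendsto.comp (Real.continuousAt_log (ne_of_gt hu0)) c2
    exact c3.inv₀ (ne_of_gt hv0)

lemma pr_nonneg (hε₀ : ε₀ ∈ Set.Ioo 0 (Real.exp (-Real.exp 1))) :
    ∀ ε ∈ Ioo (0:ℝ) 1, 0 ≤ pr ε₀ ε := by
  intro ε hε
  unfold pr
  split_ifs with h
  · have hεe : ε < Real.exp (-Real.exp 1) := lt_of_lt_of_le h hε₀.2.le
    have hu : Real.exp 1 < Real.log (1/ε) := by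
      rw [one_div, Real.log_inv]
      have := Real.log_lt_log hε.1 hεe
      rw [Real.log_exp] at this; linarith
    have hu0 : (0:ℝ) < Real.log (1/ε) := lt_trans (by positivity) hu
    have hv0 : (0:ℝ) < Real.log (Real.log (1/ε)) := by
      calc (0:ℝ) < Real.log (Real.exp 1) := by rw [Real.log_exp]; norm_num
      _ < _ := Real.log_lt_log (Real.exp_pos 1) hu
    have hd : 0 < ε * Real.log (1/ε) * (Real.log (Real.log (1/ε)))^2 :=
      mul_pos (mul_pos hε.1 hu0) (pow_pos hv0 2)
    exact le_of_lt (one_div_pos.2 hd)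
  · exact le_refl 0

lemma pr_integrable (hε₀ : ε₀ ∈ Set.Ioo 0 (Real.exp (-Real.exp 1))) :
    IntegrableOn (pr ε₀) (Ioo (0:ℝ) 1) := by
  have hε₀1 : ε₀ < 1 := lt_trans hε₀.2 (by
    rw [Real.exp_lt_one_iff]
    have := Real.exp_pos 1
    linarith)
  have h1 : IntegrableOn (fun ε : ℝ => 1 / (ε * Real.log (1 / ε) * (Real.log (Real.log (1 / ε))) ^ 2)) (Ioc (0:ℝ) ε₀) := by
    have := intervalIntegral.integrableOn_deriv_of_nonneg (F_cont ε₀ hε₀) (pr_deriv ε₀ hε₀)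
      (fun ε hε => by
        have hεe : ε < Real.exp (-Real.exp 1) := lt_trans hε.2 hε₀.2
        have hu : Real.exp 1 < Real.log (1/ε) := by
          rw [one_div, Real.log_inv]
          have := Real.log_lt_log hε.1 hεe
          rw [Real.log_exp] at this; linarith
        have hu0 : (0:ℝ) < Real.log (1/ε) := lt_trans (by positivity) hu
        have hv0 : (0:ℝ) < Real.log (Real.log (1/ε)) := by
          calc (0:ℝ) < Real.log (Real.exp 1) := by rw [Real.log_exp]; norm_num
          _ < _ := Real.log_lt_log (Real.exp_pos 1) hu
        have hd : 0 < ε * Real.log (1/ε) * (Real.log (Real.log (1/ε)))^2 :=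
          mul_pos (mul_pos hε.1 hu0) (pow_pos hv0 2)
        exact le_of_lt (one_div_pos.2 hd))
    exact this
  have h1' : IntegrableOn (pr ε₀) (Ioo (0:ℝ) ε₀) := by
    apply (h1.mono_set Ioo_subset_Ioc_self).congr_fun _ measurableSet_Ioo
    intro ε hε
    simp [pr, hε.2]
  have h2 : IntegrableOn (pr ε₀) (Ico ε₀ 1) := by
    apply IntegrableOn.congr_fun (integrableOn_zero) _ measurableSet_Ico
    intro ε hε
    simp [pr, not_lt.2 hε.1]
  have h3 := h1'.union h2
  apply h3.mono_set
  intro ε hε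
  rcases lt_or_ge ε ε₀ with h | h
  · exact Or.inl ⟨hε.1, h⟩
  · exact Or.inr ⟨h, hε.2⟩

lemma integrand_integrable (hε₀ : ε₀ ∈ Set.Ioo 0 (Real.exp (-Real.exp 1)))
    (x : ℕ → ℝ) (n : ℕ) :
    IntegrableOn (fun ε => (∏ i ∈ Finset.range n, (1 + ε * x i)) * pr ε₀ ε)
      (Ioo (0:ℝ) 1) := by
  set C := ∏ i ∈ Finset.range n, (1 + |x i|) with hC
  have hprodcont : Continuous (fun ε : ℝ => ∏ i ∈ Finset.range n, (1 + ε * x i)) := by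
    apply continuous_finset_prod
    intro i _
    fun_prop
  have hprm : Measurable (pr ε₀) := by
    unfold pr
    apply Measurable.ite (measurableSet_lt measurable_id measurable_const) _ measurable_const
    measurability
  apply Integrable.mono' ((pr_integrable ε₀ hε₀).const_mul C)
    (hprodcont.aestronglyMeasurable.mul hprm.aestronglyMeasurable)
  rw [ae_restrict_iff' measurableSet_Ioo]
  apply Filter.Eventually.of_forall
  intro ε hε
  have hpr0 : 0 ≤ pr ε₀ ε := pr_nonneg ε₀ hε₀ ε hε
  simp only [Pi.mul_apply]
  rw [norm_mul, Real.norm_eq_abs, Real.norm_eq_abs, abs_of_nonneg hpr0]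
  apply mul_le_mul_of_nonneg_right _ hpr0
  calc |∏ i ∈ Finset.range n, (1 + ε * x i)| = ∏ i ∈ Finset.range n, |1 + ε * x i| :=
        Finset.abs_prod _ _
  _ ≤ C := by
      apply Finset.prod_le_prod (fun i _ => abs_nonneg _)
      intro i _
      calc |1 + ε * x i| ≤ |(1:ℝ)| + |ε * x i| := abs_add_le _ _
      _ = 1 + ε * |x i| := by rw [abs_one, abs_mul, abs_of_nonneg hε.1.le]
      _ ≤ 1 + 1 * |x i| := by
          have := abs_nonneg (x i)
          nlinarith [hε.2]
      _ = 1 + |x i| := by ring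

set_option maxHeartbeats 2000000 in
lemma key_est (hε₀ : ε₀ ∈ Set.Ioo 0 (Real.exp (-Real.exp 1)))
    (δ : ℝ) (hδ0 : 0 < δ) (hδ1 : δ ≤ 1)
    (x : ℕ → ℝ) (hx : ∀ i, -1 ≤ x i) (n : ℕ) (M : ℝ)
    (ha3 : 3 ≤ A2 x n)
    (he : Real.exp 1 ≤ Real.log (A2 x n))
    (hεδ : Real.sqrt (2 * Real.log (Real.log (A2 x n)) / A2 x n) ≤ δ/28)
    (hε4 : Real.sqrt (2 * Real.log (Real.log (A2 x n)) / A2 x n) ≤ 1/4)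
    (hεε₀ : 2 * Real.sqrt (2 * Real.log (Real.log (A2 x n)) / A2 x n) < ε₀)
    (hM : M ≤ δ/4 * Real.exp (δ * Real.log (Real.log (A2 x n)) / 2)
      / (Real.log (Real.log (A2 x n)))^2)
    (hS : (1+δ) * Real.sqrt (2 * A2 x n * Real.log (Real.log (A2 x n))) ≤ S x n) :
    M ≤ K (pr ε₀) x n := by
  have hε₀1 : ε₀ < 1 := lt_trans hε₀.2 (by
    rw [Real.exp_lt_one_iff]; have := Real.exp_pos 1; linarith)
  set a := A2 x n with ha_def
  set L := Real.log (Real.log a) with hL_def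
  set en := Real.sqrt (2 * L / a) with hen_def
  have hexp1 : (1:ℝ) < Real.exp 1 := by
    have := Real.add_one_le_exp 1; linarith
  have hla : 0 < Real.log a := lt_of_lt_of_le (Real.exp_pos 1) he
  have ha : 0 < a := by linarith
  have hL1 : 1 ≤ L := by
    have := Real.log_le_log (Real.exp_pos 1) he
    rwa [Real.log_exp] at this
  have hL0 : (0:ℝ) < L := by linarith
  have hq : 0 < 2 * L / a := by positivity
  have hen : 0 < en := Real.sqrt_pos.2 hq
  have hen2 : en ^ 2 = 2 * L / a := Real.sq_sqrt hq.le
  have key1 : en ^ 2 * a = 2 * L := by rw [hen2]; field_simp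
  have key2 : en * Real.sqrt (2 * a * L) = 2 * L := by
    rw [hen_def, ← Real.sqrt_mul hq.le]
    have : 2 * L / a * (2 * a * L) = (2 * L) ^ 2 := by field_simp
    rw [this, Real.sqrt_sq (by positivity)]
  set b := (1 + δ/2) * en with hb_def
  have hδ2 : (1:ℝ) ≤ 1 + δ/2 := by linarith
  have hδ32 : (1:ℝ) + δ/2 ≤ 3/2 := by linarith
  have henb : en ≤ b := by
    have := mul_le_mul_of_nonneg_right hδ2 hen.le
    rw [one_mul] at this; linarith
  have hbpos : 0 < b := lt_of_lt_of_le hen henb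
  have hb2 : b ≤ 1/2 := by
    have h1 := mul_le_mul hδ32 hε4 hen.le (by norm_num)
    rw [hb_def]; linarith
  have hb2en : b ≤ 2 * en := by
    have := mul_le_mul_of_nonneg_right (show (1:ℝ)+δ/2 ≤ 2 by linarith) hen.le
    rw [hb_def]; linarith
  have hbε₀ : b < ε₀ := lt_of_le_of_lt hb2en hεε₀
  have hS0 : 0 ≤ S x n := le_trans (by positivity) hS
  -- exponent bound
  have hexpbd : ∀ ε ∈ Icc en b, (1 + δ/2) * L ≤ ε * S x n - ε^2 * a / 2 - ε^3 * a := by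
    intro ε hε
    obtain ⟨hε1, hε2⟩ := hε
    have hεpos : 0 < ε := lt_of_lt_of_le hen hε1
    have t1 : (1+δ) * (2*L) ≤ ε * S x n := by
      calc (1+δ) * (2*L) = en * ((1+δ) * Real.sqrt (2*a*L)) := by
            rw [← key2]; ring
      _ ≤ en * S x n := mul_le_mul_of_nonneg_left hS hen.le
      _ ≤ ε * S x n := mul_le_mul_of_nonneg_right hε1 hS0
    have t2 : ε^2 * a ≤ (1+δ/2)^2 * (2*L) := by
      calc ε^2 * a ≤ b^2 * a :=
            mul_le_mul_of_nonneg_right (pow_le_pow_left₀ hεpos.le hε2 2) ha.le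
      _ = (1+δ/2)^2 * (en^2 * a) := by rw [hb_def]; ring
      _ = (1+δ/2)^2 * (2*L) := by rw [key1]
    have t3 : ε^3 * a ≤ δ/4 * L := by
      have s1 : ε^3 * a ≤ b^3 * a :=
        mul_le_mul_of_nonneg_right (pow_le_pow_left₀ hεpos.le hε2 3) ha.le
      have s2 : b^3 * a = (1+δ/2)^3 * en * (2*L) := by
        rw [hb_def, ← key1]; ring
      have s3 : (1+δ/2)^3 * en ≤ (3/2)^3 * (δ/28) :=
        mul_le_mul (pow_le_pow_left₀ (by linarith) hδ32 3) hεδ hen.le (by positivity)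
      have s4 : (1+δ/2)^3 * en * (2*L) ≤ (3/2)^3 * (δ/28) * (2*L) :=
        mul_le_mul_of_nonneg_right s3 (by linarith)
      have s5 : (3/2:ℝ)^3 * (δ/28) * (2*L) = 27/112 * (δ * L) := by ring
      have s6 : (27:ℝ)/112 * (δ * L) ≤ δ/4 * L := by
        have hδL : 0 ≤ δ * L := by positivity
        nlinarith
      linarith
    have hδδ : 0 ≤ (δ/4) * (1 - δ) * L := by
      apply mul_nonneg (mul_nonneg (by linarith) (by linarith)) hL0.le
    have e1 : (1+δ) * (2*L) = 2*L + 2*(δ*L) := by ring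
    have e2 : ((1+δ/2):ℝ)^2 * (2*L) = 2*L + 2*(δ*L) + δ*(δ*L)/2 := by ring
    have e3 : ((1+δ/2):ℝ) * L = L + (δ*L)/2 := by ring
    have e4 : (δ/4) * (1 - δ) * L = (δ*L)/4 - δ*(δ*L)/4 := by ring
    have e5 : (δ/4) * L = (δ*L)/4 := by ring
    rw [e3]
    rw [e1] at t1
    rw [e2] at t2
    rw [e5] at t3
    rw [e4] at hδδ
    linarith [t1, t2, t3, hδδ]
  -- prior lower bound on the interval
  set U := Real.log (1/en) with hU_def
  have hene : en < Real.exp (-Real.exp 1) := by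
    have := hε₀.2; linarith
  have hUe : Real.exp 1 < U := by
    rw [hU_def, one_div, Real.log_inv]
    have := Real.log_lt_log hen hene
    rw [Real.log_exp] at this; linarith
  have hU0 : (0:ℝ) < U := lt_trans (by positivity) hUe
  have hlnU1 : (1:ℝ) < Real.log U := by
    calc (1:ℝ) = Real.log (Real.exp 1) := (Real.log_exp 1).symm
    _ < _ := Real.log_lt_log (Real.exp_pos 1) hUe
  have hlnU0 : (0:ℝ) < Real.log U := by linarith
  set P := 1 / (2 * en * U * (Real.log U)^2) with hP_def
  have hP0 : 0 < P := by
    rw [hP_def]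
    apply one_div_pos.2
    exact mul_pos (mul_pos (by linarith) hU0) (pow_pos hlnU0 2)
  have hprbd : ∀ ε ∈ Icc en b, P ≤ pr ε₀ ε := by
    intro ε hε
    obtain ⟨hε1, hε2⟩ := hε
    have hεpos : 0 < ε := lt_of_lt_of_le hen hε1
    have hεε₀' : ε < ε₀ := lt_of_le_of_lt hε2 hbε₀
    have hεe : ε < Real.exp (-Real.exp 1) := lt_trans hεε₀' hε₀.2
    have hu : Real.exp 1 < Real.log (1/ε) := by
      rw [one_div, Real.log_inv]
      have := Real.log_lt_log hεpos hεe
      rw [Real.log_exp] at this; linarith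
    have hu0 : (0:ℝ) < Real.log (1/ε) := lt_trans (by positivity) hu
    have hv1 : (1:ℝ) < Real.log (Real.log (1/ε)) := by
      calc (1:ℝ) = Real.log (Real.exp 1) := (Real.log_exp 1).symm
      _ < _ := Real.log_lt_log (Real.exp_pos 1) hu
    have hv0 : (0:ℝ) < Real.log (Real.log (1/ε)) := by linarith
    have huU : Real.log (1/ε) ≤ U := by
      apply Real.log_le_log (by positivity)
      apply div_le_div_of_nonneg_left (by norm_num) hen hε1
    have hvV : Real.log (Real.log (1/ε)) ≤ Real.log U :=
      Real.log_le_log hu0 huU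
    have hdenom : ε * Real.log (1/ε) * (Real.log (Real.log (1/ε)))^2
        ≤ 2 * en * U * (Real.log U)^2 := by
      apply mul_le_mul
      · exact mul_le_mul (by linarith) huU hu0.le (by linarith)
      · exact pow_le_pow_left₀ hv0.le hvV 2
      · positivity
      · positivity
    rw [pr]
    rw [if_pos hεε₀', hP_def]
    apply one_div_le_one_div_of_le _ hdenom
    exact mul_pos (mul_pos hεpos hu0) (pow_pos hv0 2)
  -- integral bound
  have hsub : Icc en b ⊆ Ioo (0:ℝ) 1 := fun ε hε =>
    ⟨lt_of_lt_of_le hen hε.1, lt_of_le_of_lt hε.2 (lt_trans hbε₀ hε₀1)⟩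
  have hint := integrand_integrable ε₀ hε₀ x n
  have hnonneg : 0 ≤ᵐ[volume.restrict (Ioo (0:ℝ) 1)]
      (fun ε => (∏ i ∈ Finset.range n, (1 + ε * x i)) * pr ε₀ ε) := by
    rw [EventuallyLE, ae_restrict_iff' measurableSet_Ioo]
    apply Filter.Eventually.of_forall
    intro ε hε
    simp only [Pi.zero_apply]
    apply mul_nonneg _ (pr_nonneg ε₀ hε₀ ε hε)
    apply Finset.prod_nonneg
    intro i _
    nlinarith [hx i, hε.1, hε.2]
  have hK : K (pr ε₀) x n
      = ∫ ε in Ioo (0:ℝ) 1, (∏ i ∈ Finset.range n, (1 + ε * x i)) * pr ε₀ ε := rfl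
  have hmono : (∫ ε in Icc en b, (∏ i ∈ Finset.range n, (1 + ε * x i)) * pr ε₀ ε)
      ≤ K (pr ε₀) x n := by
    rw [hK]
    exact setIntegral_mono_set hint hnonneg (HasSubset.Subset.eventuallyLE hsub)
  set c := Real.exp ((1 + δ/2) * L) * P with hc_def
  have hconst : ∀ ε ∈ Icc en b,
      c ≤ (∏ i ∈ Finset.range n, (1 + ε * x i)) * pr ε₀ ε := by
    intro ε hε
    have hεpos : 0 < ε := lt_of_lt_of_le hen hε.1
    have hε12 : ε ≤ 1/2 := le_trans hε.2 hb2
    have hpr := prod_ge_exp x hx n hεpos hε12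
    have hE := hexpbd ε hε
    have h1 : Real.exp ((1 + δ/2) * L) ≤ ∏ i ∈ Finset.range n, (1 + ε * x i) := by
      apply le_trans _ hpr
      apply Real.exp_le_exp.2
      linarith [hE]
    exact mul_le_mul h1 (hprbd ε hε) hP0.le (le_trans (Real.exp_pos _).le h1)
  have hvol : (volume (Icc en b)).toReal = δ/2 * en := by
    rw [Real.volume_Icc, ENNReal.toReal_ofReal (by linarith)]
    rw [hb_def]; ring
  have hstep2 := setIntegral_ge_of_const_le_real measurableSet_Icc
    (ne_of_lt measure_Icc_lt_top) hconst (hint.mono_set hsub)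
  rw [measureReal_def, hvol] at hstep2
  -- final arithmetic
  have hU_le : U ≤ Real.exp L := by
    have hlog_en : Real.log en = Real.log (2*L/a) / 2 := by
      rw [hen_def, Real.log_sqrt hq.le]
    have hlog_div : Real.log (2*L/a) = Real.log (2*L) - Real.log a :=
      Real.log_div (by positivity) (ne_of_gt ha)
    have h2L : 0 ≤ Real.log (2*L) := Real.log_nonneg (by linarith)
    have hexpL : Real.exp L = Real.log a := Real.exp_log hla
    rw [hU_def, one_div, Real.log_inv, hlog_en, hlog_div, hexpL]
    linarith
  have hlnU_le : Real.log U ≤ L := by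
    have := Real.log_le_log hU0 hU_le
    rwa [Real.log_exp] at this
  have hden : U * (Real.log U)^2 ≤ Real.exp L * L^2 :=
    mul_le_mul hU_le (pow_le_pow_left₀ hlnU0.le hlnU_le 2) (by positivity)
      (Real.exp_pos L).le
  have hcval : c * (δ/2 * en)
      = δ/4 * (Real.exp ((1+δ/2)*L) / (U * (Real.log U)^2)) := by
    rw [hc_def, hP_def]
    field_simp
    ring
  have hfrac : Real.exp ((1+δ/2)*L) / (Real.exp L * L^2)
      ≤ Real.exp ((1+δ/2)*L) / (U * (Real.log U)^2) := by
    apply div_le_div_of_nonneg_left (Real.exp_pos _).le _ hden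
    exact mul_pos hU0 (pow_pos hlnU0 2)
  have hfrac2 : Real.exp ((1+δ/2)*L) / (Real.exp L * L^2)
      = Real.exp (δ * L / 2) / L^2 := by
    have : (1+δ/2)*L = L + δ*L/2 := by ring
    rw [this, Real.exp_add]
    field_simp [ne_of_gt (Real.exp_pos L)]
  have hMc : M ≤ c * (δ/2 * en) := by
    rw [hcval]
    calc M ≤ δ/4 * Real.exp (δ * L / 2) / L^2 := hM
    _ = δ/4 * (Real.exp ((1+δ/2)*L) / (Real.exp L * L^2)) := by
        rw [hfrac2]; ring
    _ ≤ _ := by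
        apply mul_le_mul_of_nonneg_left hfrac (by linarith)
  linarith [hmono, hstep2, hMc]

lemma en_small {τ : ℝ} (hτ : 0 < τ) :
    ∀ᶠ a : ℝ in atTop, Real.sqrt (2 * Real.log (Real.log a) / a) ≤ τ := by
  filter_upwards [eventually_ge_atTop (max 16 ((4/τ^2)^2))] with a haa
  have h16 : (16:ℝ) ≤ a := le_trans (le_max_left _ _) haa
  have hτa : (4/τ^2)^2 ≤ a := le_trans (le_max_right _ _) haa
  have ha0 : (0:ℝ) < a := by linarith
  have hsq : (0:ℝ) < Real.sqrt a := Real.sqrt_pos.2 ha0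
  have hla : Real.log a ≤ 2 * Real.sqrt a := by
    have h1 : Real.log a = 2 * Real.log (Real.sqrt a) := by
      conv_lhs => rw [← Real.sq_sqrt ha0.le]
      rw [Real.log_pow]
      norm_num
    have h2 : Real.log (Real.sqrt a) ≤ Real.sqrt a - 1 :=
      Real.log_le_sub_one_of_pos hsq
    linarith
  have hla1 : 0 < Real.log a := by
    have he16 : Real.exp 1 ≤ 16 := by
      have := Real.exp_one_lt_d9
      linarith
    have : Real.log (Real.exp 1) ≤ Real.log 16 := Real.log_le_log (Real.exp_pos 1) he16
    rw [Real.log_exp] at this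
    have h2 : Real.log 16 ≤ Real.log a := Real.log_le_log (by norm_num) h16
    linarith
  have hlla : Real.log (Real.log a) ≤ 2 * Real.sqrt a := by
    have := Real.log_le_sub_one_of_pos hla1
    linarith
  have h2La : 2 * Real.log (Real.log a) / a ≤ 4 / Real.sqrt a := by
    rw [div_le_div_iff₀ ha0 hsq]
    have : 4 * Real.sqrt a * Real.sqrt a = 4 * a := by
      rw [mul_assoc, Real.mul_self_sqrt ha0.le]
    nlinarith [hlla, hsq]
  have h4τ : 4 / Real.sqrt a ≤ τ^2 := by
    have hs : 4/τ^2 ≤ Real.sqrt a := by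
      have := Real.sqrt_le_sqrt hτa
      rwa [Real.sqrt_sq (by positivity)] at this
    rw [div_le_iff₀ hsq]
    have h4τ2 : 0 < 4/τ^2 := by positivity
    calc (4:ℝ) = (4/τ^2) * τ^2 := by field_simp
    _ ≤ Real.sqrt a * τ^2 := by
        apply mul_le_mul_of_nonneg_right hs (by positivity)
    _ = τ^2 * Real.sqrt a := by ring
  calc Real.sqrt (2 * Real.log (Real.log a) / a) ≤ Real.sqrt (τ^2) :=
        Real.sqrt_le_sqrt (by linarith)
  _ = τ := Real.sqrt_sq hτ.le

lemma exp_growth {δ : ℝ} (hδ : 0 < δ) (M : ℝ) :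
    ∀ᶠ L : ℝ in atTop, M ≤ δ/4 * Real.exp (δ * L / 2) / L^2 := by
  have h1 : Tendsto (fun L : ℝ => δ * L / 2) atTop atTop := by
    apply Tendsto.atTop_div_const (by norm_num)
    exact Tendsto.const_mul_atTop hδ tendsto_id
  have h2 : Tendsto (fun L : ℝ => Real.exp (δ*L/2) / (δ*L/2)^2) atTop atTop :=
    (Real.tendsto_exp_div_pow_atTop 2).comp h1
  have h3 : Tendsto (fun L : ℝ => δ/4 * Real.exp (δ * L / 2) / L^2) atTop atTop := by
    have heq : ∀ᶠ L : ℝ in atTop,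
        (δ/4 * (δ/2)^2) * (Real.exp (δ*L/2) / (δ*L/2)^2)
          = δ/4 * Real.exp (δ * L / 2) / L^2 := by
      filter_upwards [eventually_gt_atTop (0:ℝ)] with L hL
      field_simp
    exact Tendsto.congr' heq (h2.const_mul_atTop (by positivity))
  exact h3.eventually_ge_atTop M


theorem lil_prior_rate (ε₀ : ℝ) (hε₀ : ε₀ ∈ Set.Ioo 0 (Real.exp (-Real.exp 1)))
    (x : ℕ → ℝ) (hx : ∀ i, -1 ≤ x i)
    (hA : Filter.Tendsto (A2 x) Filter.atTop Filter.atTop)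
    (hls : 1 < Filter.limsup
      (fun n => ((S x n / Real.sqrt (2 * A2 x n * Real.log (Real.log (A2 x n))) : ℝ) : EReal))
      Filter.atTop) :
    Filter.limsup
      (fun n => ((K (fun ε => if ε < ε₀ then
          1 / (ε * Real.log (1 / ε) * (Real.log (Real.log (1 / ε))) ^ 2) else 0) x n : ℝ) : EReal))
      Filter.atTop = ⊤ := by
  obtain ⟨c, hc1, hclt⟩ := EReal.exists_between_coe_real hls
  have hc1' : (1:ℝ) < c := by exact_mod_cast hc1
  have hfreq : ∃ᶠ n in atTop, (c : EReal)
      < ((S x n / Real.sqrt (2 * A2 x n * Real.log (Real.log (A2 x n))) : ℝ) : EReal) :=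
    frequently_lt_of_lt_limsup (by isBoundedDefault) hclt
  set δ := min (c - 1) 1 with hδ_def
  have hδ0 : 0 < δ := lt_min (by linarith) one_pos
  have hδ1 : δ ≤ 1 := min_le_right _ _
  have h1δc : 1 + δ ≤ c := by
    have := min_le_left (c-1) 1
    simp only [hδ_def]
    linarith
  -- L tendsto
  have hLtend : Tendsto (fun n => Real.log (Real.log (A2 x n))) atTop atTop :=
    Real.tendsto_log_atTop.comp (Real.tendsto_log_atTop.comp hA)
  -- show limsup = ⊤
  rw [← top_le_iff]
  by_contra hcon
  push_neg at hcon
  obtain ⟨M, hM1, _⟩ := EReal.exists_between_coe_real hcon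
  -- frequently M ≤ K
  have hev : ∀ᶠ n in atTop,
      (3 ≤ A2 x n ∧ Real.exp 1 ≤ Real.log (A2 x n)) ∧
      (Real.sqrt (2 * Real.log (Real.log (A2 x n)) / A2 x n) ≤ δ/28 ∧
       Real.sqrt (2 * Real.log (Real.log (A2 x n)) / A2 x n) ≤ 1/4 ∧
       2 * Real.sqrt (2 * Real.log (Real.log (A2 x n)) / A2 x n) < ε₀) ∧
      M ≤ δ/4 * Real.exp (δ * Real.log (Real.log (A2 x n)) / 2)
        / (Real.log (Real.log (A2 x n)))^2 := by
    have e1 := hA.eventually (eventually_ge_atTop (3:ℝ))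
    have e2 := (Real.tendsto_log_atTop.comp hA).eventually
      (eventually_ge_atTop (Real.exp 1))
    have e3 := hA.eventually (en_small (show (0:ℝ) < δ/28 by positivity))
    have e4 := hA.eventually (en_small (show (0:ℝ) < 1/4 by norm_num))
    have e5 := hA.eventually (en_small (show (0:ℝ) < ε₀/4 by
      have := hε₀.1; positivity))
    have e6 := hLtend.eventually (exp_growth hδ0 M)
    filter_upwards [e1, e2, e3, e4, e5, e6] with n h1 h2 h3 h4 h5 h6
    refine ⟨⟨h1, h2⟩, ⟨h3, h4, ?_⟩, h6⟩
    have := hε₀.1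
    calc 2 * Real.sqrt (2 * Real.log (Real.log (A2 x n)) / A2 x n)
        ≤ 2 * (ε₀/4) := by linarith
    _ < ε₀ := by linarith
  have hfreqK : ∃ᶠ n in atTop, (M:EReal) ≤
      ((K (pr ε₀) x n : ℝ) : EReal) := by
    apply (hfreq.and_eventually hev).mono
    rintro n ⟨hSn, ⟨ha3, he⟩, ⟨h3, h4, h5⟩, h6⟩
    have hL1 : 1 ≤ Real.log (Real.log (A2 x n)) := by
      have := Real.log_le_log (Real.exp_pos 1) he
      rwa [Real.log_exp] at this
    have hsqpos : 0 < Real.sqrt (2 * A2 x n * Real.log (Real.log (A2 x n))) := by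
      apply Real.sqrt_pos.2
      nlinarith
    have hSr : c < S x n / Real.sqrt (2 * A2 x n * Real.log (Real.log (A2 x n))) := by
      exact_mod_cast hSn
    have hS' : (1+δ) * Real.sqrt (2 * A2 x n * Real.log (Real.log (A2 x n))) ≤ S x n := by
      rw [lt_div_iff₀ hsqpos] at hSr
      calc (1+δ) * Real.sqrt (2 * A2 x n * Real.log (Real.log (A2 x n)))
          ≤ c * Real.sqrt (2 * A2 x n * Real.log (Real.log (A2 x n))) :=
            mul_le_mul_of_nonneg_right h1δc hsqpos.le
      _ ≤ S x n := hSr.le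
    have := key_est ε₀ hε₀ δ hδ0 hδ1 x hx n M ha3 he h3 h4 h5 h6 hS'
    exact_mod_cast this
  have hle : (M:EReal) ≤ Filter.limsup
      (fun n => ((K (pr ε₀) x n : ℝ) : EReal)) atTop :=
    le_limsup_of_frequently_le' hfreqK
  have : Filter.limsup
      (fun n => ((K (fun ε => if ε < ε₀ then
          1 / (ε * Real.log (1 / ε) * (Real.log (Real.log (1 / ε))) ^ 2) else 0) x n : ℝ) : EReal))
      Filter.atTop = Filter.limsup (fun n => ((K (pr ε₀) x n : ℝ) : EReal)) atTop := rfl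
  rw [this] at hM1
  exact absurd (lt_of_lt_of_le hM1 hle) (lt_irrefl _)
end

section
/- Let ψ satisfy Assumption 2 with constants M_ψ, δ_ψ. Then there exist ε_0 ∈ (0, min(1, 1/M_ψ)) and δ > 0 such that: F[ψ] is integrable on (0,ε_0); F[ψ](ε) ≥ δ for all ε ∈ (0,ε_0); and ε ↦ ε·F[ψ](ε) is (weakly) increasing on (0,ε_0). In particular, the function equal to F[ψ] on (0,ε_0) and to 0 on [ε_0,1] satisfies Assumption 1. -/
open MeasureTheory Filter Set

/-- Assumption 2: `ψ` is positive and increasing on `(M,∞)`, the integral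
`∫_M^∞ ψ(λ) e^{-ψ(λ)²/2} dλ/λ` is finite, and `λ ψ(λ) e^{-ψ(λ)²/2} > δ` on `(M,∞)`. -/
def Assumption2 (ψ : ℝ → ℝ) (M δ : ℝ) : Prop :=
  0 < M ∧ 0 < δ ∧
  (∀ l ∈ Set.Ioi M, 0 < ψ l) ∧
  MonotoneOn ψ (Set.Ioi M) ∧
  MeasureTheory.IntegrableOn (fun l => ψ l * Real.exp (-(ψ l) ^ 2 / 2) / l) (Set.Ioi M) ∧
  (∀ l ∈ Set.Ioi M, δ < l * ψ l * Real.exp (-(ψ l) ^ 2 / 2))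

/-- The functional `F[ψ](ε) = (ψ(1/ε)/ε)·exp(-ψ(1/ε)²/2)`. -/
noncomputable def Ffun (ψ : ℝ → ℝ) (ε : ℝ) : ℝ :=
  ψ (1 / ε) / ε * Real.exp (-(ψ (1 / ε)) ^ 2 / 2)

/-- `β(ε) = max(-2 ln(ε π(ε)), 1)`. -/
noncomputable def betaFun (π : ℝ → ℝ) (ε : ℝ) : ℝ :=
  max (-2 * Real.log (ε * π ε)) 1

/-- The functional `G[π](λ) = √(β(1/λ) + ln β(1/λ))`. -/
noncomputable def Gfun (π : ℝ → ℝ) (l : ℝ) : ℝ :=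
  Real.sqrt (betaFun π (1 / l) + Real.log (betaFun π (1 / l)))

lemma aux_anti {s t : ℝ} (hs : 1 ≤ s) (hst : s ≤ t) :
    t * Real.exp (-t ^ 2 / 2) ≤ s * Real.exp (-s ^ 2 / 2) := by
  have e1 : 1 + (t - s) ≤ Real.exp ((t ^ 2 - s ^ 2) / 2) := by
    have := Real.add_one_le_exp ((t ^ 2 - s ^ 2) / 2)
    nlinarith
  have h1 : t ≤ s * Real.exp ((t ^ 2 - s ^ 2) / 2) := by
    calc t ≤ s * (1 + (t - s)) := by nlinarith
      _ ≤ s * Real.exp ((t ^ 2 - s ^ 2) / 2) :=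
        mul_le_mul_of_nonneg_left e1 (by linarith)
  have h2 := mul_le_mul_of_nonneg_right h1 (Real.exp_pos (-t ^ 2 / 2)).le
  rwa [mul_assoc, ← Real.exp_add,
    show (t ^ 2 - s ^ 2) / 2 + -t ^ 2 / 2 = -s ^ 2 / 2 by ring] at h2

lemma img_inv {a : ℝ} (ha : 0 < a) : (fun l : ℝ => l⁻¹) '' Ioi a⁻¹ = Ioo 0 a := by
  ext x
  constructor
  · rintro ⟨l, hl, rfl⟩
    have hl0 : (0:ℝ) < l := lt_trans (by positivity) hl
    exact ⟨by positivity, by rwa [inv_lt_comm₀ hl0 ha]⟩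
  · rintro ⟨hx0, hxa⟩
    exact ⟨x⁻¹, (inv_lt_inv₀ ha hx0).mpr hxa, inv_inv x⟩

theorem F_maps_to_Pi0 (ψ : ℝ → ℝ) (M δψ : ℝ) (hψ : Assumption2 ψ M δψ) :
    ∃ ε₀ ∈ Set.Ioo (0 : ℝ) (min 1 (1 / M)), ∃ δ > (0 : ℝ),
      MeasureTheory.IntegrableOn (Ffun ψ) (Set.Ioo 0 ε₀) ∧
      (∀ ε ∈ Set.Ioo (0 : ℝ) ε₀, δ ≤ Ffun ψ ε) ∧
      MonotoneOn (fun ε => ε * Ffun ψ ε) (Set.Ioo (0 : ℝ) ε₀) ∧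
      ∃ επ δπ, Assumption1 (fun ε => if ε < ε₀ then Ffun ψ ε else 0) επ δπ := by
  obtain ⟨hM, hδ, hpos, hmono, hint, hlb⟩ := hψ
  -- Step 1: there is l₀ > M with ψ l₀ ≥ 1
  obtain ⟨l₀, hl₀M, hl₀1⟩ : ∃ l₀ ∈ Ioi M, 1 ≤ ψ l₀ := by
    by_contra h
    push_neg at h
    set c : ℝ := ψ (M + 1) * Real.exp (-1 / 2) with hc
    have hM1 : M + 1 ∈ Ioi M := mem_Ioi.mpr (by linarith)
    have hc0 : 0 < c := by
      have := hpos (M + 1) hM1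
      positivity
    have hI : IntegrableOn (fun l => c * l⁻¹) (Ioi (M + 1)) := by
      apply ((hint.mono_set (Ioi_subset_Ioi (by linarith))).mono'
        ((measurable_const.mul measurable_inv).aestronglyMeasurable))
      rw [ae_restrict_iff' measurableSet_Ioi]
      refine ae_of_all _ fun l hl => ?_
      have hlM : l ∈ Ioi M := mem_of_mem_of_subset hl (Ioi_subset_Ioi (by linarith))
      have hl0 : (0:ℝ) < l := lt_trans (by linarith) hl
      have hψl : ψ (M + 1) ≤ ψ l := hmono hM1 hlM (le_of_lt hl)
      have hψl1 : ψ l < 1 := h l hlM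
      have hψl0 : 0 < ψ l := hpos l hlM
      have hexp : Real.exp (-1 / 2) ≤ Real.exp (-(ψ l) ^ 2 / 2) := by
        apply Real.exp_le_exp.mpr
        nlinarith
      rw [Real.norm_eq_abs]
      show |c * l⁻¹| ≤ _
      rw [abs_of_pos (mul_pos hc0 (inv_pos.mpr hl0))]
      rw [div_eq_mul_inv]
      apply mul_le_mul_of_nonneg_right _ (by positivity)
      calc c ≤ ψ l * Real.exp (-1 / 2) := by
              exact mul_le_mul_of_nonneg_right hψl (Real.exp_pos _).le
        _ ≤ ψ l * Real.exp (-(ψ l) ^ 2 / 2) :=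
              mul_le_mul_of_nonneg_left hexp hψl0.le
    have hI2 : IntegrableOn (fun l : ℝ => l⁻¹) (Ioi (M + 1)) := by
      have := hI.const_mul c⁻¹
      simp [← mul_assoc, inv_mul_cancel₀ hc0.ne'] at this; exact this
    exact not_IntegrableOn_Ioi_inv hI2
  have hl₀0 : 0 < l₀ := lt_trans hM hl₀M
  -- Step 2: choose ε₀
  set ε₀ : ℝ := min (1/2) (2 * l₀)⁻¹ with hε₀def
  have hε₀0 : 0 < ε₀ := by
    apply lt_min (by norm_num)
    positivity
  have hε₀l₀ : ε₀ < l₀⁻¹ := by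
    calc ε₀ ≤ (2 * l₀)⁻¹ := min_le_right _ _
      _ < l₀⁻¹ := by
          apply inv_lt_inv₀ (by positivity) (by positivity) |>.mpr
          linarith
  have hε₀mem : ε₀ ∈ Ioo (0:ℝ) (min 1 (1 / M)) := by
    constructor
    · exact hε₀0
    · apply lt_min
      · calc ε₀ ≤ 1/2 := min_le_left _ _
          _ < 1 := by norm_num
      · calc ε₀ < l₀⁻¹ := hε₀l₀
          _ < M⁻¹ := (inv_lt_inv₀ hl₀0 hM).mpr hl₀M
          _ = 1 / M := (one_div M).symm
  have hkey : ∀ ε ∈ Ioo (0:ℝ) ε₀, l₀ ≤ 1 / ε ∧ M < 1 / ε := by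
    intro ε hε
    have h1 : l₀ < 1 / ε := by
      rw [lt_div_iff₀ hε.1]
      have : ε < l₀⁻¹ := lt_trans hε.2 hε₀l₀
      calc l₀ * ε < l₀ * l₀⁻¹ := by
            exact mul_lt_mul_of_pos_left this hl₀0
        _ = 1 := mul_inv_cancel₀ hl₀0.ne'
    exact ⟨h1.le, lt_trans hl₀M h1⟩
  -- Step 3: lower bound
  have hlow : ∀ ε ∈ Ioo (0:ℝ) ε₀, δψ ≤ Ffun ψ ε := by
    intro ε hε
    obtain ⟨_, hMε⟩ := hkey ε hε
    have h1 := hlb (1 / ε) hMε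
    have e : Ffun ψ ε = 1 / ε * ψ (1 / ε) * Real.exp (-(ψ (1 / ε)) ^ 2 / 2) := by
      unfold Ffun; ring
    rw [e]; exact h1.le
  -- Step 5: monotonicity
  have hmon : MonotoneOn (fun ε => ε * Ffun ψ ε) (Ioo (0:ℝ) ε₀) := by
    intro a ha b hb hab
    obtain ⟨hl₀a, hMa⟩ := hkey a ha
    obtain ⟨hl₀b, hMb⟩ := hkey b hb
    have h1ab : 1 / b ≤ 1 / a := one_div_le_one_div_of_le ha.1 hab
    have hψab : ψ (1 / b) ≤ ψ (1 / a) := hmono (mem_Ioi.mpr hMb) (mem_Ioi.mpr hMa) h1ab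
    have hψb1 : 1 ≤ ψ (1 / b) := le_trans hl₀1 (hmono hl₀M (mem_Ioi.mpr hMb) hl₀b)
    have ea : a * Ffun ψ a = ψ (1 / a) * Real.exp (-(ψ (1 / a)) ^ 2 / 2) := by
      unfold Ffun; field_simp; exact mul_div_cancel_left₀ _ ha.1.ne'
    have eb : b * Ffun ψ b = ψ (1 / b) * Real.exp (-(ψ (1 / b)) ^ 2 / 2) := by
      unfold Ffun; field_simp; exact div_self hb.1.ne'
    simp only [ea, eb]
    exact aux_anti hψb1 hψab
  -- Step 6: integrability
  have hIoo : IntegrableOn (Ffun ψ) (Ioo 0 ε₀) := by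
    have hMε₀ : M < ε₀⁻¹ := by
      have h2 : ε₀ < M⁻¹ := by
        rw [← one_div]; exact lt_of_lt_of_le hε₀mem.2 (min_le_right _ _)
      exact (lt_inv_comm₀ hM hε₀0).mpr h2
    have hderiv : ∀ x ∈ Ioi ε₀⁻¹, HasDerivWithinAt (fun l : ℝ => l⁻¹) (-(x^2)⁻¹) (Ioi ε₀⁻¹) x := by
      intro x hx
      have hx0 : x ≠ 0 := (lt_trans (by positivity) hx).ne'
      exact (hasDerivAt_inv hx0).hasDerivWithinAt
    have key := integrableOn_image_iff_integrableOn_abs_deriv_smul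
      measurableSet_Ioi hderiv (inv_injective.injOn) (Ffun ψ)
    rw [img_inv hε₀0] at key
    rw [key]
    apply (hint.mono_set (Ioi_subset_Ioi hMε₀.le)).congr_fun _ measurableSet_Ioi
    intro x hx
    have hx0 : (0:ℝ) < x := lt_trans (by positivity) hx
    have : Ffun ψ x⁻¹ = ψ x * x * Real.exp (-(ψ x) ^ 2 / 2) := by
      unfold Ffun
      rw [one_div, inv_inv]
      field_simp
    dsimp only
    rw [smul_eq_mul, this, abs_neg, abs_of_pos (by positivity)]
    field_simp
  refine ⟨ε₀, hε₀mem, δψ, hδ, hIoo, hlow, hmon, ε₀, δψ, ?_⟩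
  -- Assumption1
  refine ⟨⟨hε₀0, lt_of_lt_of_le hε₀mem.2 (min_le_left _ _)⟩, hδ, ?_, ?_, ?_, ?_⟩
  · intro ε hε
    dsimp only
    by_cases h : ε < ε₀
    · rw [if_pos h]
      rcases eq_or_lt_of_le hε.1 with h0 | h0
      · simp [Ffun, ← h0]
      · exact le_trans hδ.le (hlow ε ⟨h0, h⟩)
    · rw [if_neg h]
  · -- integrability on Icc 0 1
    have h1 : IntegrableOn (fun ε => if ε < ε₀ then Ffun ψ ε else 0) (Ioo 0 ε₀) :=
      hIoo.congr_fun (fun x hx => (if_pos hx.2).symm) measurableSet_Ioo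
    have h1' : IntegrableOn (fun ε => if ε < ε₀ then Ffun ψ ε else 0) (Ico 0 ε₀) := by
      rwa [integrableOn_Ico_iff_integrableOn_Ioo]
    have h2 : IntegrableOn (fun ε => if ε < ε₀ then Ffun ψ ε else 0) (Icc ε₀ 1) := by
      apply (integrableOn_zero (s := Icc ε₀ 1)).congr_fun _ measurableSet_Icc
      intro x hx
      exact (if_neg (not_lt.mpr hx.1)).symm
    apply (h1'.union h2).mono_set
    intro x hx
    rcases lt_or_ge x ε₀ with h | h
    · exact Or.inl ⟨hx.1, h⟩
    · exact Or.inr ⟨h, hx.2⟩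
  · intro ε hε
    dsimp only
    rw [if_pos hε.2]
    exact hlow ε hε
  · intro a ha b hb hab
    dsimp only
    rw [if_pos ha.2, if_pos hb.2]
    exact hmon ha hb hab
end

section
/- Let π satisfy Assumption 1. Then there exist λ_0 > 0 and δ > 0 such that: G[π] is positive and (weakly) increasing on (λ_0,∞); ∫_{λ_0}^∞ G[π](λ)·e^{-G[π](λ)²/2} dλ/λ < ∞; and λ·G[π](λ)·e^{-G[π](λ)²/2} > δ for all λ > λ_0. In particular, G[π] satisfies Assumption 2. -/
open MeasureTheory Filter Set

private lemma exists_small_eps (π : ℝ → ℝ) (επ δπ : ℝ) (hπ : Assumption1 π επ δπ) :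
    ∃ ε₁ ∈ Set.Ioo (0:ℝ) επ, ε₁ * π ε₁ < Real.exp (-1) := by
  obtain ⟨hεπ, hδπ, hnn, hint, hlb, hmono⟩ := hπ
  by_contra hcon
  push_neg at hcon
  have hsub : Set.Ioo (0:ℝ) επ ⊆ Set.Icc (0:ℝ) 1 :=
    fun x hx => ⟨hx.1.le, hx.2.le.trans hεπ.2.le⟩
  have hπint : MeasureTheory.IntegrableOn π (Set.Ioo (0:ℝ) επ) := hint.mono_set hsub
  have hi : MeasureTheory.IntegrableOn (fun ε : ℝ => Real.exp (-1) * ε⁻¹) (Set.Ioo (0:ℝ) επ) := by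
    refine hπint.mono' ?_ ?_
    · exact ((measurable_const.mul measurable_inv).aestronglyMeasurable)
    · rw [MeasureTheory.ae_restrict_iff' measurableSet_Ioo]
      refine MeasureTheory.ae_of_all _ (fun ε hε => ?_)
      have h1 := hcon ε hε
      have hε0 : (0:ℝ) < ε := hε.1
      have : ‖Real.exp (-1) * ε⁻¹‖ = Real.exp (-1) * ε⁻¹ := by
        rw [Real.norm_eq_abs, abs_of_nonneg]
        positivity
      rw [this]
      calc Real.exp (-1) * ε⁻¹ ≤ (ε * π ε) * ε⁻¹ := by
            gcongr
          _ = π ε := by field_simp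
  have hi2 : MeasureTheory.IntegrableOn (fun ε : ℝ => ε⁻¹) (Set.Ioo (0:ℝ) επ) := by
    have h2 := hi.const_mul (Real.exp 1)
    have heq : (fun ε : ℝ => Real.exp 1 * (Real.exp (-1) * ε⁻¹)) = fun ε : ℝ => ε⁻¹ := by
      funext ε
      rw [← mul_assoc, ← Real.exp_add]
      norm_num
    rwa [heq] at h2
  have hi3 : MeasureTheory.IntegrableOn (fun ε : ℝ => ε ^ (-1 : ℝ)) (Set.Ioo (0:ℝ) επ) := by
    refine hi2.congr_fun (fun x hx => ?_) measurableSet_Ioo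
    rw [Real.rpow_neg_one]
  have := (intervalIntegral.integrableOn_Ioo_rpow_iff hεπ.1).1 hi3
  linarith

theorem G_maps_to_PsiInfty (π : ℝ → ℝ) (επ δπ : ℝ) (hπ : Assumption1 π επ δπ) :
    ∃ lam₀ > (0 : ℝ), ∃ δ > (0 : ℝ),
      (∀ l ∈ Set.Ioi lam₀, 0 < Gfun π l) ∧
      MonotoneOn (Gfun π) (Set.Ioi lam₀) ∧
      MeasureTheory.IntegrableOn
        (fun l => Gfun π l * Real.exp (-(Gfun π l) ^ 2 / 2) / l) (Set.Ioi lam₀) ∧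
      (∀ l ∈ Set.Ioi lam₀, δ < l * Gfun π l * Real.exp (-(Gfun π l) ^ 2 / 2)) ∧
      ∃ M δψ, Assumption2 (Gfun π) M δψ := by
  obtain ⟨ε₁, hε₁, hε₁lt⟩ := exists_small_eps π επ δπ hπ
  obtain ⟨hεπ, hδπ, hnn, hint, hlb, hmono⟩ := hπ
  set lam₀ : ℝ := ε₁⁻¹ with hlam
  have hε₁0 : 0 < ε₁ := hε₁.1
  have hlam0 : 0 < lam₀ := by positivity
  have hmem : ∀ l ∈ Set.Ioi lam₀, 1 / l ∈ Set.Ioo (0:ℝ) ε₁ := by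
    intro l hl
    have hl0 : 0 < l := lt_trans hlam0 hl
    have hl' : lam₀ < l := hl
    refine ⟨by positivity, ?_⟩
    rw [div_lt_iff₀ hl0]
    nlinarith [mul_pos hε₁0 (sub_pos.2 hl'), mul_inv_cancel₀ hε₁0.ne']
  have hmemπ : ∀ l ∈ Set.Ioi lam₀, 1 / l ∈ Set.Ioo (0:ℝ) επ := by
    intro l hl
    exact ⟨(hmem l hl).1, (hmem l hl).2.trans hε₁.2⟩
  have hHpos : ∀ l ∈ Set.Ioi lam₀, 0 < (1/l) * π (1/l) := by
    intro l hl
    have hl0 : 0 < l := lt_trans hlam0 hl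
    exact mul_pos (by positivity) (lt_of_lt_of_le hδπ (hlb _ (hmemπ l hl)))
  have hHlt : ∀ l ∈ Set.Ioi lam₀, (1/l) * π (1/l) < Real.exp (-1) := by
    intro l hl
    have hm1 := hmem l hl
    have h1 : (1/l) * π (1/l) ≤ ε₁ * π ε₁ := by
      have := hmono ⟨hm1.1, hm1.2.trans hε₁.2⟩ hε₁ hm1.2.le
      simpa using this
    exact lt_of_le_of_lt h1 hε₁lt
  have hbeta : ∀ l ∈ Set.Ioi lam₀,
      betaFun π (1/l) = -2 * Real.log ((1/l) * π (1/l)) ∧ 2 ≤ betaFun π (1/l) := by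
    intro l hl
    have hHp := hHpos l hl
    have hHl := hHlt l hl
    have hlog : Real.log ((1/l) * π (1/l)) < -1 := by
      have := Real.log_lt_log hHp hHl
      rwa [Real.log_exp] at this
    have hmax : betaFun π (1/l) = -2 * Real.log ((1/l) * π (1/l)) := by
      unfold betaFun
      exact max_eq_left (by linarith)
    exact ⟨hmax, by rw [hmax]; linarith⟩
  have hkey : ∀ l ∈ Set.Ioi lam₀,
      Real.sqrt (betaFun π (1/l)) * Real.exp (-(Gfun π l)^2/2) = (1/l) * π (1/l) := by
    intro l hl
    obtain ⟨hβeq, hβ2⟩ := hbeta l hl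
    set β := betaFun π (1/l) with hβdef
    have hβ0 : 0 < β := by linarith
    have hlogβ : 0 ≤ Real.log β := Real.log_nonneg (by linarith)
    have hGsq : (Gfun π l)^2 = β + Real.log β := by
      unfold Gfun
      rw [← hβdef, Real.sq_sqrt (by linarith)]
    rw [hGsq]
    have h1 : Real.exp (-(β + Real.log β)/2)
        = Real.exp (-β/2) * Real.exp (-(Real.log β)/2) := by
      rw [← Real.exp_add]; ring_nf
    have hs : Real.sqrt β = Real.exp (Real.log β / 2) := by
      rw [Real.sqrt_eq_rpow, Real.rpow_def_of_pos hβ0]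
      ring_nf
    have h2 : Real.sqrt β * Real.exp (-(Real.log β)/2) = 1 := by
      rw [hs, ← Real.exp_add]
      have : Real.log β / 2 + -(Real.log β)/2 = 0 := by ring
      rw [this, Real.exp_zero]
    calc Real.sqrt β * Real.exp (-(β + Real.log β)/2)
        = (Real.sqrt β * Real.exp (-(Real.log β)/2)) * Real.exp (-β/2) := by rw [h1]; ring
      _ = Real.exp (-β/2) := by rw [h2, one_mul]
      _ = (1/l) * π (1/l) := by
          rw [hβeq]
          have h3 : -(-2 * Real.log ((1/l) * π (1/l)))/2 = Real.log ((1/l) * π (1/l)) := by ring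
          rw [h3, Real.exp_log (hHpos l hl)]
  have hβmono : ∀ l₁ ∈ Set.Ioi lam₀, ∀ l₂ ∈ Set.Ioi lam₀, l₁ ≤ l₂ →
      betaFun π (1/l₁) ≤ betaFun π (1/l₂) := by
    intro l₁ h₁ l₂ h₂ hle
    rw [(hbeta l₁ h₁).1, (hbeta l₂ h₂).1]
    have hl₁0 : 0 < l₁ := lt_trans hlam0 h₁
    have hdiv : 1/l₂ ≤ 1/l₁ := one_div_le_one_div_of_le hl₁0 hle
    have hm := hmono (hmemπ l₂ h₂) (hmemπ l₁ h₁) hdiv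
    simp only at hm
    have := Real.log_le_log (hHpos l₂ h₂) hm
    linarith
  have hGpos : ∀ l ∈ Set.Ioi lam₀, 0 < Gfun π l := by
    intro l hl
    have h2 := (hbeta l hl).2
    have hlog : 0 ≤ Real.log (betaFun π (1/l)) := Real.log_nonneg (by linarith)
    exact Real.sqrt_pos.2 (by linarith)
  have hGmono : MonotoneOn (Gfun π) (Set.Ioi lam₀) := by
    intro l₁ h₁ l₂ h₂ hle
    have hb := hβmono l₁ h₁ l₂ h₂ hle
    have h0 : 0 < betaFun π (1/l₁) := by linarith [(hbeta l₁ h₁).2]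
    unfold Gfun
    exact Real.sqrt_le_sqrt (by linarith [Real.log_le_log h0 hb])
  have hlow : ∀ l ∈ Set.Ioi lam₀, δπ ≤ l * Gfun π l * Real.exp (-(Gfun π l)^2/2) := by
    intro l hl
    have hl0 : 0 < l := lt_trans hlam0 hl
    have hkeyl := hkey l hl
    have hG : Real.sqrt (betaFun π (1/l)) ≤ Gfun π l := by
      unfold Gfun
      have : 0 ≤ Real.log (betaFun π (1/l)) :=
        Real.log_nonneg (by linarith [(hbeta l hl).2])
      exact Real.sqrt_le_sqrt (by linarith)
    have hexp : (0:ℝ) ≤ Real.exp (-(Gfun π l)^2/2) := (Real.exp_pos _).le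
    calc δπ ≤ π (1/l) := hlb _ (hmemπ l hl)
      _ = l * ((1/l) * π (1/l)) := by field_simp
      _ = l * (Real.sqrt (betaFun π (1/l)) * Real.exp (-(Gfun π l)^2/2)) := by rw [hkeyl]
      _ ≤ l * Gfun π l * Real.exp (-(Gfun π l)^2/2) := by
          rw [mul_assoc]
          gcongr
  have hstrict : ∀ l ∈ Set.Ioi lam₀, δπ/2 < l * Gfun π l * Real.exp (-(Gfun π l)^2/2) :=
    fun l hl => lt_of_lt_of_le (by linarith) (hlow l hl)
  have hg : MeasureTheory.IntegrableOn
      (fun l => Real.sqrt 2 * (π (1/l) / l^2)) (Set.Ioi lam₀) := by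
    have hf0 : MeasureTheory.Integrable ((Set.Ioo (0:ℝ) ε₁).indicator π) := by
      rw [MeasureTheory.integrable_indicator_iff measurableSet_Ioo]
      exact hint.mono_set (fun x hx => ⟨hx.1.le, hx.2.le.trans (hε₁.2.le.trans hεπ.2.le)⟩)
    have h1 := (integrableOn_Ioi_comp_rpow_iff' ((Set.Ioo (0:ℝ) ε₁).indicator π)
      (p := -1) (by norm_num)).2 hf0.integrableOn
    have h2 := h1.mono_set (Set.Ioi_subset_Ioi hlam0.le)
    have h3 : MeasureTheory.IntegrableOn (fun x : ℝ => π (1/x) / x^2) (Set.Ioi lam₀) := by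
      refine h2.congr_fun (fun x hx => ?_) measurableSet_Ioi
      have hx0 : 0 < x := lt_trans hlam0 hx
      have hxm : x ^ (-1:ℝ) ∈ Set.Ioo (0:ℝ) ε₁ := by
        rw [Real.rpow_neg_one, ← one_div]
        exact hmem x hx
      beta_reduce
      rw [smul_eq_mul, Set.indicator_of_mem hxm, Real.rpow_neg_one,
        show (-1 - 1 : ℝ) = -2 by norm_num, Real.rpow_neg hx0.le, Real.rpow_two]
      rw [one_div, div_eq_mul_inv, mul_comm]
    exact h3.const_mul (Real.sqrt 2)
  have hGmeas : AEMeasurable (Gfun π) (volume.restrict (Set.Ioi lam₀)) :=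
    aemeasurable_restrict_of_monotoneOn measurableSet_Ioi hGmono
  have hFmeas : MeasureTheory.AEStronglyMeasurable
      (fun l => Gfun π l * Real.exp (-(Gfun π l)^2/2) / l)
      (volume.restrict (Set.Ioi lam₀)) := by
    apply AEMeasurable.aestronglyMeasurable
    have h1 : AEMeasurable (fun l => -(Gfun π l)^2/2) (volume.restrict (Set.Ioi lam₀)) :=
      ((hGmeas.pow_const 2).neg).div_const 2
    have h2 : AEMeasurable (fun l => Real.exp (-(Gfun π l)^2/2))
        (volume.restrict (Set.Ioi lam₀)) := Real.measurable_exp.comp_aemeasurable h1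
    exact (hGmeas.mul h2).div aemeasurable_id
  have hFint : MeasureTheory.IntegrableOn
      (fun l => Gfun π l * Real.exp (-(Gfun π l)^2/2) / l) (Set.Ioi lam₀) := by
    refine hg.mono' hFmeas ?_
    rw [MeasureTheory.ae_restrict_iff' measurableSet_Ioi]
    refine MeasureTheory.ae_of_all _ (fun l hl => ?_)
    have hl0 : 0 < l := lt_trans hlam0 hl
    have hβ2 : 2 ≤ betaFun π (1/l) := (hbeta l hl).2
    have hβ0 : (0:ℝ) < betaFun π (1/l) := by linarith
    have hlogβ : Real.log (betaFun π (1/l)) ≤ betaFun π (1/l) := by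
      have := Real.log_le_sub_one_of_pos hβ0
      linarith
    have hGle : Gfun π l ≤ Real.sqrt 2 * Real.sqrt (betaFun π (1/l)) := by
      rw [← Real.sqrt_mul (by norm_num : (0:ℝ) ≤ 2)]
      unfold Gfun
      exact Real.sqrt_le_sqrt (by linarith)
    have hGnn : 0 ≤ Gfun π l := (hGpos l hl).le
    have hnorm : ‖Gfun π l * Real.exp (-(Gfun π l)^2/2) / l‖
        = Gfun π l * Real.exp (-(Gfun π l)^2/2) / l := by
      rw [Real.norm_eq_abs, abs_of_nonneg]
      positivity
    rw [hnorm]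
    calc Gfun π l * Real.exp (-(Gfun π l)^2/2) / l
        ≤ (Real.sqrt 2 * Real.sqrt (betaFun π (1/l))) * Real.exp (-(Gfun π l)^2/2) / l := by
          gcongr
      _ = Real.sqrt 2 * ((Real.sqrt (betaFun π (1/l)) * Real.exp (-(Gfun π l)^2/2)) / l) := by
          ring
      _ = Real.sqrt 2 * (((1/l) * π (1/l)) / l) := by rw [hkey l hl]
      _ = Real.sqrt 2 * (π (1/l) / l^2) := by
          rw [pow_two]
          ring
  exact ⟨lam₀, hlam0, δπ/2, by positivity, hGpos, hGmono, hFint, hstrict,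
    lam₀, δπ/2, hlam0, by positivity, hGpos, hGmono, hFint, hstrict⟩
end

section
/- Let π satisfy Assumption 1. Then lim_{ε↓0} F[G[π]](ε)/π(ε) = 1; moreover, for all sufficiently small ε > 0, F[G[π]](ε) = π(ε)·√((β(ε) + ln β(ε))/β(ε)), where β(ε) = -2·ln(ε·π(ε)). -/
open MeasureTheory Filter Set

lemma aux_compute (π : ℝ → ℝ) (ε : ℝ) (hε : 0 < ε) (hp : 0 < ε * π ε)
    (h1 : 1 ≤ -2 * Real.log (ε * π ε)) :
    Ffun (Gfun π) ε = π ε * Real.sqrt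
      ((-2 * Real.log (ε * π ε) + Real.log (-2 * Real.log (ε * π ε))) /
        (-2 * Real.log (ε * π ε))) := by
  set t := -2 * Real.log (ε * π ε) with ht_def
  have ht : (0:ℝ) < t := lt_of_lt_of_le one_pos h1
  have hlt : 0 ≤ Real.log t := Real.log_nonneg h1
  have hsum : 0 ≤ t + Real.log t := by linarith
  have hbe : betaFun π (1 / (1/ε)) = t := by
    rw [one_div_one_div]
    exact max_eq_left h1
  unfold Ffun Gfun
  rw [hbe, Real.sq_sqrt hsum]
  have hst : (0:ℝ) < Real.sqrt t := Real.sqrt_pos.2 ht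
  have hexp : Real.exp (-(t + Real.log t) / 2) = (ε * π ε) * (Real.sqrt t)⁻¹ := by
    have h2 : -(t + Real.log t) / 2 = Real.log (ε * π ε) + -Real.log (Real.sqrt t) := by
      rw [Real.log_sqrt ht.le]; rw [ht_def]; ring
    rw [h2, Real.exp_add, Real.exp_log hp, Real.exp_neg, Real.exp_log hst]
  rw [hexp, Real.sqrt_div hsum t]
  have hεne : ε ≠ 0 := ne_of_gt hε
  field_simp

lemma aux_sqrt_tendsto :
    Tendsto (fun t : ℝ => Real.sqrt ((t + Real.log t) / t)) atTop (nhds 1) := by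
  have h0 : Tendsto (fun t : ℝ => Real.log t / t) atTop (nhds 0) :=
    Real.isLittleO_log_id_atTop.tendsto_div_nhds_zero
  have h1 : Tendsto (fun t : ℝ => 1 + Real.log t / t) atTop (nhds 1) := by
    simpa using tendsto_const_nhds.add h0
  have h2 : Tendsto (fun t : ℝ => (t + Real.log t) / t) atTop (nhds 1) := by
    apply h1.congr'
    filter_upwards [eventually_gt_atTop (0:ℝ)] with t ht
    field_simp
  have := (Real.continuous_sqrt.tendsto 1).comp h2
  rw [Real.sqrt_one] at this
  exact this

lemma aux_tendsto_zero (π : ℝ → ℝ) (επ δπ : ℝ)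
    (hεπ : επ ∈ Set.Ioo (0:ℝ) 1) (hδ : 0 < δπ)
    (hint : MeasureTheory.IntegrableOn π (Set.Icc (0 : ℝ) 1))
    (hlb : ∀ ε ∈ Set.Ioo (0 : ℝ) επ, δπ ≤ π ε)
    (hmono : MonotoneOn (fun ε => ε * π ε) (Set.Ioo (0 : ℝ) επ)) :
    Tendsto (fun ε => ε * π ε) (nhdsWithin 0 (Set.Ioi 0)) (nhds 0) := by
  have hmem : Set.Ioo (0:ℝ) επ ∈ nhdsWithin (0:ℝ) (Set.Ioi 0) :=
    Ioo_mem_nhdsGT_of_mem ⟨le_refl 0, hεπ.1⟩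
  rw [tendsto_order]
  constructor
  · intro a ha
    filter_upwards [hmem] with ε hε
    have : 0 < ε * π ε := mul_pos hε.1 (lt_of_lt_of_le hδ (hlb ε hε))
    linarith
  · intro c hc
    -- find ε₁ ∈ (0, επ) with ε₁ * π ε₁ < c
    by_cases hex : ∃ ε₁ ∈ Set.Ioo (0:ℝ) επ, ε₁ * π ε₁ < c
    · obtain ⟨ε₁, hε₁, hlt⟩ := hex
      have hmem2 : Set.Ioo (0:ℝ) ε₁ ∈ nhdsWithin (0:ℝ) (Set.Ioi 0) :=
        Ioo_mem_nhdsGT_of_mem ⟨le_refl 0, hε₁.1⟩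
      filter_upwards [hmem2] with ε hε
      have hεIoo : ε ∈ Set.Ioo (0:ℝ) επ := ⟨hε.1, hε.2.trans hε₁.2⟩
      calc ε * π ε ≤ ε₁ * π ε₁ := hmono hεIoo hε₁ hε.2.le
        _ < c := hlt
    · exfalso
      push_neg at hex
      -- then π ε ≥ c / ε on Ioo 0 επ, contradicting integrability
      have hIoo : MeasureTheory.IntegrableOn π (Set.Ioo (0:ℝ) επ) :=
        hint.mono_set (fun x hx => ⟨hx.1.le, hx.2.le.trans hεπ.2.le⟩)
      have hinv : MeasureTheory.IntegrableOn (fun x : ℝ => c * x⁻¹) (Set.Ioo (0:ℝ) επ) := by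
        refine Integrable.mono' hIoo ?_ ?_
        · exact (continuousOn_const.mul (continuousOn_inv₀.mono
            (fun x hx => ne_of_gt hx.1))).aestronglyMeasurable measurableSet_Ioo
        · filter_upwards [ae_restrict_mem measurableSet_Ioo] with x hx
          have hx0 : 0 < x := hx.1
          have h1 : c ≤ x * π x := hex x hx
          rw [Real.norm_eq_abs, abs_of_nonneg (by positivity)]
          rw [mul_inv_le_iff₀ hx0] -- c * x⁻¹ ≤ π x ↔ c ≤ π x * x ?
          linarith [h1]
      have hinv2 : MeasureTheory.IntegrableOn (fun x : ℝ => x⁻¹) (Set.Ioo (0:ℝ) επ) := by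
        have hc' : c ≠ 0 := ne_of_gt hc
        have := hinv.const_mul c⁻¹
        simpa [IntegrableOn, ← mul_assoc, inv_mul_cancel₀ hc'] using this
      have : IntervalIntegrable (fun x : ℝ => x⁻¹) volume 0 επ := by
        rw [intervalIntegrable_iff_integrableOn_Ioo_of_le hεπ.1.le]
        exact hinv2
      rw [intervalIntegrable_inv_iff] at this
      rcases this with h | h
      · exact absurd h.symm (ne_of_gt hεπ.1)
      · exact h (by rw [Set.uIcc_of_le hεπ.1.le]; exact ⟨le_refl 0, hεπ.1.le⟩)

theorem FG_asymptotic_identity (π : ℝ → ℝ) (επ δπ : ℝ) (hπ : Assumption1 π επ δπ) :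
    Filter.Tendsto (fun ε => Ffun (Gfun π) ε / π ε) (nhdsWithin 0 (Set.Ioi 0)) (nhds 1) ∧
    ∀ᶠ ε in nhdsWithin (0 : ℝ) (Set.Ioi 0),
      Ffun (Gfun π) ε =
        π ε * Real.sqrt
          ((-2 * Real.log (ε * π ε) + Real.log (-2 * Real.log (ε * π ε))) /
            (-2 * Real.log (ε * π ε))) := by
  obtain ⟨hεπ, hδ, hnn, hint, hlb, hmono⟩ := hπ
  have hmem : Set.Ioo (0:ℝ) επ ∈ nhdsWithin (0:ℝ) (Set.Ioi 0) :=
    Ioo_mem_nhdsGT_of_mem ⟨le_refl 0, hεπ.1⟩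
  have hpos : ∀ᶠ ε in nhdsWithin (0:ℝ) (Set.Ioi 0), 0 < ε * π ε := by
    filter_upwards [hmem] with ε hε
    exact mul_pos hε.1 (lt_of_lt_of_le hδ (hlb ε hε))
  have htend0 := aux_tendsto_zero π επ δπ hεπ hδ hint hlb hmono
  have htend0' : Tendsto (fun ε => ε * π ε) (nhdsWithin 0 (Set.Ioi 0))
      (nhdsWithin 0 (Set.Ioi 0)) := by
    rw [tendsto_nhdsWithin_iff]
    exact ⟨htend0, hpos⟩
  have hlog : Tendsto (fun ε => Real.log (ε * π ε)) (nhdsWithin 0 (Set.Ioi 0)) atBot :=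
    Real.tendsto_log_nhdsGT_zero.comp htend0'
  have hbtop : Tendsto (fun ε => -2 * Real.log (ε * π ε)) (nhdsWithin 0 (Set.Ioi 0)) atTop := by
    have := hlog.const_mul_atBot_of_neg (show (-2:ℝ) < 0 by norm_num)
    exact this
  have hb1 : ∀ᶠ ε in nhdsWithin (0:ℝ) (Set.Ioi 0), 1 ≤ -2 * Real.log (ε * π ε) :=
    hbtop.eventually_ge_atTop 1
  have hid : ∀ᶠ ε in nhdsWithin (0:ℝ) (Set.Ioi 0),
      Ffun (Gfun π) ε = π ε * Real.sqrt
        ((-2 * Real.log (ε * π ε) + Real.log (-2 * Real.log (ε * π ε))) /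
          (-2 * Real.log (ε * π ε))) := by
    filter_upwards [hmem, hpos, hb1] with ε hε hp h1
    exact aux_compute π ε hε.1 hp h1
  refine ⟨?_, hid⟩
  have hsq := aux_sqrt_tendsto.comp hbtop
  apply hsq.congr'
  filter_upwards [hid, hmem] with ε heq hε
  have hπε : π ε ≠ 0 := ne_of_gt (lt_of_lt_of_le hδ (hlb ε hε))
  rw [heq]
  exact (mul_div_cancel_left₀ _ hπε).symm
end

section
/- Let ψ satisfy Assumption 2. Then for all sufficiently large λ one has G[F[ψ]](λ) = √(ψ(λ)² - 2·ln ψ(λ) + ln(ψ(λ)² - 2·ln ψ(λ))) and G[F[ψ]](λ) < ψ(λ). -/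
open MeasureTheory Filter Set

theorem GF_composition (ψ : ℝ → ℝ) (M δψ : ℝ) (hψ : Assumption2 ψ M δψ) :
    ∀ᶠ l in Filter.atTop,
      Gfun (Ffun ψ) l =
        Real.sqrt ((ψ l) ^ 2 - 2 * Real.log (ψ l) +
          Real.log ((ψ l) ^ 2 - 2 * Real.log (ψ l))) ∧
      Gfun (Ffun ψ) l < ψ l := by
  obtain ⟨hM, hδ, hpos, hmono, hint, hlb⟩ := hψ
  -- Step 1: there is some point where ψ exceeds 1
  have hexists : ∃ l0, M < l0 ∧ 1 < ψ l0 := by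
    by_contra h
    push_neg at h
    set a := ψ (M + 1) with ha_def
    have hM1 : M + 1 ∈ Set.Ioi M := by simp
    have ha : 0 < a := hpos _ hM1
    set c := a * Real.exp (-(1 : ℝ) / 2) with hc_def
    have hc : 0 < c := mul_pos ha (Real.exp_pos _)
    have hsub : Set.Ioi (M + 1) ⊆ Set.Ioi M := Set.Ioi_subset_Ioi (by linarith)
    have hint1 : MeasureTheory.IntegrableOn
        (fun l => ψ l * Real.exp (-(ψ l) ^ 2 / 2) / l) (Set.Ioi (M + 1)) :=
      hint.mono_set hsub
    have hbound : ∀ l ∈ Set.Ioi (M + 1), c * l⁻¹ ≤ ψ l * Real.exp (-(ψ l) ^ 2 / 2) / l := by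
      intro l hl
      have hlM : l ∈ Set.Ioi M := hsub hl
      have hl0 : (0 : ℝ) < l := by have := hl.out; linarith
      have hψl : 0 < ψ l := hpos _ hlM
      have hψle : ψ l ≤ 1 := h l hlM.out
      have hal : a ≤ ψ l := hmono hM1 hlM (le_of_lt hl.out)
      have hexp : Real.exp (-(1 : ℝ) / 2) ≤ Real.exp (-(ψ l) ^ 2 / 2) := by
        apply Real.exp_le_exp.2
        nlinarith
      have : c ≤ ψ l * Real.exp (-(ψ l) ^ 2 / 2) := by
        calc c = a * Real.exp (-(1 : ℝ) / 2) := rfl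
        _ ≤ ψ l * Real.exp (-(ψ l) ^ 2 / 2) := by
            apply mul_le_mul hal hexp (le_of_lt (Real.exp_pos _)) (le_of_lt hψl)
      rw [div_eq_mul_inv]
      exact mul_le_mul_of_nonneg_right this (inv_nonneg.2 hl0.le)
    have hinv : MeasureTheory.IntegrableOn (fun l : ℝ => c * l⁻¹) (Set.Ioi (M + 1)) := by
      apply MeasureTheory.Integrable.mono' hint1
      · exact (measurable_const.mul measurable_inv).aestronglyMeasurable
      · filter_upwards [MeasureTheory.ae_restrict_mem measurableSet_Ioi] with l hl
        have hl0 : (0 : ℝ) < l := by have := hl.out; linarith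
        rw [Real.norm_eq_abs, abs_of_nonneg (by positivity)]
        exact hbound l hl
    have hinv2 : MeasureTheory.IntegrableOn (fun l : ℝ => l⁻¹) (Set.Ioi (M + 1)) := by
      have := hinv.const_mul c⁻¹
      have heq : (fun l : ℝ => c⁻¹ * (c * l⁻¹)) = fun l : ℝ => l⁻¹ := by
        funext l; rw [← mul_assoc, inv_mul_cancel₀ hc.ne', one_mul]
      rwa [heq] at this
    have hM1pos : (0 : ℝ) < M + 1 := by linarith
    have : MeasureTheory.IntegrableOn (fun l : ℝ => l ^ (-1 : ℝ)) (Set.Ioi (M + 1)) := by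
      apply hinv2.congr_fun _ measurableSet_Ioi
      intro l hl
      simp [Real.rpow_neg_one]
    rw [integrableOn_Ioi_rpow_iff hM1pos] at this
    linarith
  obtain ⟨l0, hl0M, hl0⟩ := hexists
  filter_upwards [Filter.eventually_ge_atTop (max l0 1)] with l hl
  have hll0 : l0 ≤ l := le_trans (le_max_left _ _) hl
  have hl1 : (1 : ℝ) ≤ l := le_trans (le_max_right _ _) hl
  have hlpos : (0 : ℝ) < l := by linarith
  have hlM : l ∈ Set.Ioi M := by simp only [Set.mem_Ioi]; linarith
  have hψl : 1 < ψ l := lt_of_lt_of_le hl0 (hmono (Set.mem_Ioi.2 hl0M) hlM hll0)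
  have hψpos : 0 < ψ l := by linarith
  -- compute ε π(ε) at ε = 1/l
  have hinvl : 1 / (1 / l) = l := one_div_one_div l
  have hprod : (1 / l) * Ffun ψ (1 / l) = ψ l * Real.exp (-(ψ l) ^ 2 / 2) := by
    unfold Ffun
    rw [hinvl]
    field_simp
  have hlog : Real.log ((1 / l) * Ffun ψ (1 / l)) = Real.log (ψ l) + (-(ψ l) ^ 2 / 2) := by
    rw [hprod, Real.log_mul hψpos.ne' (Real.exp_pos _).ne', Real.log_exp]
  have hlogψ : 0 < Real.log (ψ l) := Real.log_pos hψl
  have hX1 : 1 ≤ (ψ l) ^ 2 - 2 * Real.log (ψ l) := by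
    have h1 : Real.log (ψ l) ≤ ψ l - 1 := Real.log_le_sub_one_of_pos hψpos
    nlinarith
  have hbeta : betaFun (Ffun ψ) (1 / l) = (ψ l) ^ 2 - 2 * Real.log (ψ l) := by
    unfold betaFun
    rw [hlog]
    rw [max_eq_left (by linarith)]
    ring
  constructor
  · unfold Gfun
    rw [hbeta]
  · unfold Gfun
    rw [hbeta]
    rw [Real.sqrt_lt' hψpos]
    have hXlt : (ψ l) ^ 2 - 2 * Real.log (ψ l) < (ψ l) ^ 2 := by linarith
    have hloglt : Real.log ((ψ l) ^ 2 - 2 * Real.log (ψ l)) < Real.log ((ψ l) ^ 2) :=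
      Real.log_lt_log (by linarith) hXlt
    have : Real.log ((ψ l) ^ 2) = 2 * Real.log (ψ l) := by
      rw [Real.log_pow]; push_cast; ring
    linarith
end
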